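/- arXiv:2605.05860 — 10 statements merged into one kernel-verified Lean document; each statement's English description precedes it below -/
import Mathlib

section
/- Let P = {(x,y) ∈ ℝ^m × ℝ^s : v^l·x − u^l·y − σ^l ≥ 0, l = 1,…,L} with each (v^l,u^l) strictly positive, and let T = P ∩ (ℝ^m_+ × (ℝ^s_+ \ {0})). Assume ∂^s(P) = ∂^w(P). Then a point (x,y) ∈ T belongs to the strongly efficient frontier ∂^s(T) if and only if there exists an index l̄ ∈ {1,…,L} such that v^{l̄}·x − u^{l̄}·y − σ^{l̄} = 0. -/
noncomputable section

open Finset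

/-- A point in input-output space: `m` inputs and `s` outputs. -/
abbrev Pt (m s : ℕ) := (Fin m → ℝ) × (Fin s → ℝ)

/-- Standard inner product. -/
def dot {n : ℕ} (v x : Fin n → ℝ) : ℝ := ∑ i, v i * x i

/-- Strongly efficient frontier: non-dominated points of `T`. -/
def strongF {m s : ℕ} (T : Set (Pt m s)) : Set (Pt m s) :=
  {p | p ∈ T ∧ ∀ q : Pt m s,
    (∀ i, q.1 i ≤ p.1 i) → (∀ r, p.2 r ≤ q.2 r) → q ≠ p → q ∉ T}

/-- Weakly efficient frontier of `T`. -/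
def weakF {m s : ℕ} (T : Set (Pt m s)) : Set (Pt m s) :=
  {p | p ∈ T ∧ ∀ q : Pt m s,
    (∀ i, q.1 i < p.1 i) → (∀ r, p.2 r < q.2 r) → q ∉ T}

/-- The polyhedron `P = {(x,y) : vˡ·x − uˡ·y − σˡ ≥ 0, l = 1,…,L}`. -/
def polyP {m s L : ℕ} (v : Fin L → Fin m → ℝ) (u : Fin L → Fin s → ℝ)
    (σ : Fin L → ℝ) : Set (Pt m s) :=
  {p | ∀ l, 0 ≤ dot (v l) p.1 - dot (u l) p.2 - σ l}

/-- `T = P ∩ (ℝ^m_+ × (ℝ^s_+ \ {0}))`. -/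
def TSet {m s L : ℕ} (v : Fin L → Fin m → ℝ) (u : Fin L → Fin s → ℝ)
    (σ : Fin L → ℝ) : Set (Pt m s) :=
  {p | p ∈ polyP v u σ ∧ (∀ i, 0 ≤ p.1 i) ∧ (∀ r, 0 ≤ p.2 r) ∧ p.2 ≠ 0}

/-- a point of `T` is strongly efficient iff some constraint is active. -/
theorem stmt2 {m s L : ℕ}
    (v : Fin L → Fin m → ℝ) (u : Fin L → Fin s → ℝ) (σ : Fin L → ℝ)
    (hpos : ∀ l, (∀ i, 0 < v l i) ∧ (∀ r, 0 < u l r))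
    (hσ : ∀ l, ∃ p ∈ polyP v u σ, dot (v l) p.1 - dot (u l) p.2 = σ l)
    (hPfront : strongF (polyP v u σ) = weakF (polyP v u σ))
    (x : Fin m → ℝ) (y : Fin s → ℝ) (hxy : (x, y) ∈ TSet v u σ) :
    (x, y) ∈ strongF (TSet v u σ) ↔
      ∃ l, dot (v l) x - dot (u l) y - σ l = 0 := by
  obtain ⟨hP, hx0, hy0, hyne⟩ := hxy
  constructor
  · rintro ⟨_, hdom⟩
    by_contra hno
    push_neg at hno
    have hslack : ∀ l, 0 < dot (v l) x - dot (u l) y - σ l :=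
      fun l => lt_of_le_of_ne (hP l) (Ne.symm (hno l))
    rcases Nat.eq_zero_or_pos s with hs | hs
    · exact hyne (funext fun r => absurd r.2 (by omega))
    set r0 : Fin s := ⟨0, hs⟩ with hr0
    have hU : ∀ l, 0 < ∑ r, u l r := fun l =>
      Finset.sum_pos (fun r _ => (hpos l).2 r) ⟨r0, Finset.mem_univ _⟩
    set F : Finset ℝ := insert 1 (Finset.univ.image fun l =>
      (dot (v l) x - dot (u l) y - σ l) / (∑ r, u l r)) with hF
    have hFne : F.Nonempty := Finset.insert_nonempty _ _
    set ε := F.min' hFne with hε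
    have hεpos : 0 < ε := by
      rw [hε, Finset.lt_min'_iff]
      intro b hb
      rw [hF, Finset.mem_insert] at hb
      rcases hb with h1 | hb
      · simp [h1]
      · obtain ⟨l, _, rfl⟩ := Finset.mem_image.mp hb
        exact div_pos (hslack l) (hU l)
    have hεle : ∀ l, ε * (∑ r, u l r) ≤ dot (v l) x - dot (u l) y - σ l := by
      intro l
      have h : ε ≤ (dot (v l) x - dot (u l) y - σ l) / (∑ r, u l r) :=
        Finset.min'_le _ _ (by
          rw [hF]
          exact Finset.mem_insert_of_mem
            (Finset.mem_image_of_mem _ (Finset.mem_univ l)))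
      exact (le_div_iff₀ (hU l)).mp h
    set y' : Fin s → ℝ := fun r => y r + ε with hy'
    have hdoty' : ∀ l, dot (u l) y' = dot (u l) y + ε * (∑ r, u l r) := by
      intro l
      simp only [dot, hy', mul_add, Finset.sum_add_distrib, Finset.mul_sum]
      congr 1
      exact Finset.sum_congr rfl fun i _ => mul_comm _ _
    refine hdom (x, y') (fun i => le_refl _) (fun r => by simp [hy']; linarith) ?_ ?_
    · intro h
      have h2 := congrFun (congrArg Prod.snd h) r0
      simp only [hy'] at h2
      linarith
    · refine ⟨fun l => ?_, hx0, fun r => by simp [hy']; linarith [hy0 r], ?_⟩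
      · show (0:ℝ) ≤ dot (v l) x - dot (u l) y' - σ l
        rw [hdoty' l]
        linarith [hεle l]
      · intro h
        have h2 := congrFun h r0
        simp only [hy', Pi.zero_apply] at h2
        linarith [hy0 r0]
  · rintro ⟨l, hl⟩
    refine ⟨⟨hP, hx0, hy0, hyne⟩, ?_⟩
    intro q hq1 hq2 hne hqT
    have hne' : q.1 ≠ x ∨ q.2 ≠ y := by
      by_contra h; push_neg at h
      exact hne (Prod.ext h.1 h.2)
    have hvle : dot (v l) q.1 ≤ dot (v l) x :=
      Finset.sum_le_sum fun i _ => mul_le_mul_of_nonneg_left (hq1 i) ((hpos l).1 i).le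
    have hule : dot (u l) y ≤ dot (u l) q.2 :=
      Finset.sum_le_sum fun r _ => mul_le_mul_of_nonneg_left (hq2 r) ((hpos l).2 r).le
    have hstrict : dot (v l) q.1 - dot (u l) q.2 < dot (v l) x - dot (u l) y := by
      rcases hne' with h | h
      · obtain ⟨i, hi⟩ := Function.ne_iff.mp h
        have hlt : q.1 i < x i := lt_of_le_of_ne (hq1 i) hi
        have hv : dot (v l) q.1 < dot (v l) x :=
          Finset.sum_lt_sum (fun j _ => mul_le_mul_of_nonneg_left (hq1 j) ((hpos l).1 j).le)
            ⟨i, Finset.mem_univ _, mul_lt_mul_of_pos_left hlt ((hpos l).1 i)⟩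
        linarith
      · obtain ⟨r, hr⟩ := Function.ne_iff.mp h
        have hlt : y r < q.2 r := lt_of_le_of_ne (hq2 r) (Ne.symm hr)
        have hu : dot (u l) y < dot (u l) q.2 :=
          Finset.sum_lt_sum (fun j _ => mul_le_mul_of_nonneg_left (hq2 j) ((hpos l).2 j).le)
            ⟨r, Finset.mem_univ _, mul_lt_mul_of_pos_left hlt ((hpos l).2 r)⟩
        linarith
    have hq := hqT.1 l
    linarith
end
end

section
/- Let P = {(x,y) ∈ ℝ^m × ℝ^s : v^l·x − u^l·y − σ^l ≥ 0, l = 1,…,L} with each (v^l,u^l) strictly positive, and let T = P ∩ (ℝ^m_+ × (ℝ^s_+ \ {0})). Assume ∂^s(P) = ∂^w(P). Then (x,y) ∈ ∂^w(T) \ ∂^s(T) if and only if (i) x_ī = 0 for some index ī ∈ {1,…,m}, and (ii) v^l·x − u^l·y − σ^l > 0 for every l ∈ {1,…,L}. -/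
noncomputable section

open Finset

lemma exists_eps {ι : Type*} [Fintype ι] (f : ι → ℝ) (hf : ∀ i, 0 < f i) :
    ∃ ε : ℝ, 0 < ε ∧ ∀ i, ε ≤ f i := by
  cases isEmpty_or_nonempty ι with
  | inl h => exact ⟨1, one_pos, fun i => (h.false i).elim⟩
  | inr h =>
    refine ⟨Finset.univ.inf' Finset.univ_nonempty f, ?_, fun i => Finset.inf'_le f (mem_univ i)⟩
    rw [Finset.lt_inf'_iff]
    exact fun i _ => hf i

lemma dot_le {n : ℕ} {v a b : Fin n → ℝ} (hv : ∀ i, 0 < v i) (h : ∀ i, a i ≤ b i) :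
    dot v a ≤ dot v b :=
  Finset.sum_le_sum fun i _ => mul_le_mul_of_nonneg_left (h i) (hv i).le

lemma dot_lt {n : ℕ} {v a b : Fin n → ℝ} (hv : ∀ i, 0 < v i) (h : ∀ i, a i ≤ b i)
    (hs : ∃ i, a i < b i) : dot v a < dot v b := by
  obtain ⟨i, hi⟩ := hs
  exact Finset.sum_lt_sum (fun j _ => mul_le_mul_of_nonneg_left (h j) (hv j).le)
    ⟨i, mem_univ i, mul_lt_mul_of_pos_left hi (hv i)⟩

lemma dot_sub_const {n : ℕ} (v x : Fin n → ℝ) (ε : ℝ) :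
    dot v (fun i => x i - ε) = dot v x - ε * dot v 1 := by
  simp [dot, mul_sub, Finset.sum_sub_distrib, Finset.mul_sum, mul_comm]

lemma dot_add_const {n : ℕ} (v x : Fin n → ℝ) (ε : ℝ) :
    dot v (fun i => x i + ε) = dot v x + ε * dot v 1 := by
  simp [dot, mul_add, Finset.sum_add_distrib, Finset.mul_sum, mul_comm]

/-- a point of `T` is weakly but not strongly efficient iff some input is
zero and every constraint is strictly slack. -/
theorem stmt3 {m s L : ℕ}
    (v : Fin L → Fin m → ℝ) (u : Fin L → Fin s → ℝ) (σ : Fin L → ℝ)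
    (hpos : ∀ l, (∀ i, 0 < v l i) ∧ (∀ r, 0 < u l r))
    (hσ : ∀ l, ∃ p ∈ polyP v u σ, dot (v l) p.1 - dot (u l) p.2 = σ l)
    (hPfront : strongF (polyP v u σ) = weakF (polyP v u σ))
    (x : Fin m → ℝ) (y : Fin s → ℝ) :
    (x, y) ∈ weakF (TSet v u σ) \ strongF (TSet v u σ) ↔
      ((x, y) ∈ TSet v u σ ∧ (∃ i, x i = 0) ∧
        ∀ l, 0 < dot (v l) x - dot (u l) y - σ l) := by
  constructor
  · rintro ⟨hw, hns⟩
    have hT : (x, y) ∈ TSet v u σ := hw.1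
    obtain ⟨hP, hx0, hy0, hyne⟩ := hT
    -- s is nonempty
    have hsne : Nonempty (Fin s) := by
      by_contra h
      exact hyne (funext fun r => ((not_nonempty_iff.mp h).false r).elim)
    -- extract a dominating point from non-strong-efficiency
    have hmem : (x, y) ∈ TSet v u σ := ⟨hP, hx0, hy0, hyne⟩
    have hq : ∃ q : Pt m s, (∀ i, q.1 i ≤ x i) ∧ (∀ r, y r ≤ q.2 r) ∧ q ≠ (x, y) ∧
        q ∈ TSet v u σ := by
      by_contra h
      push_neg at h
      exact hns ⟨hmem, fun q h1 h2 hne => h q h1 h2 hne⟩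
    obtain ⟨q, hq1, hq2, hqne, hqT⟩ := hq
    -- all constraints strictly slack
    have hstrict : ∀ l, 0 < dot (v l) x - dot (u l) y - σ l := by
      intro l
      have hkey : dot (v l) q.1 - dot (u l) q.2 < dot (v l) x - dot (u l) y := by
        have hcases : (∃ i, q.1 i < x i) ∨ (∃ r, y r < q.2 r) := by
          by_contra h
          push_neg at h
          exact hqne (Prod.ext (funext fun i => le_antisymm (hq1 i) (h.1 i))
            (funext fun r => le_antisymm (h.2 r) (hq2 r)))
        rcases hcases with h | h
        · have h1 := dot_lt (hpos l).1 hq1 h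
          have h2 := dot_le (hpos l).2 hq2
          linarith
        · have h1 := dot_le (hpos l).1 hq1
          have h2 := dot_lt (hpos l).2 hq2 h
          linarith
      have := hqT.1 l
      linarith
    refine ⟨⟨hP, hx0, hy0, hyne⟩, ?_, hstrict⟩
    -- some input is zero
    by_contra h
    push_neg at h
    have hxpos : ∀ i, 0 < x i := fun i => lt_of_le_of_ne (hx0 i) (Ne.symm (h i))
    obtain ⟨ε, hε, hεle⟩ := exists_eps
      (Sum.elim (fun l : Fin L => (dot (v l) x - dot (u l) y - σ l) /
        (dot (v l) 1 + dot (u l) 1)) x)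
      (by
        rintro (l | i)
        · apply div_pos (hstrict l)
          have h1 : 0 ≤ dot (v l) (1 : Fin m → ℝ) :=
            Finset.sum_nonneg fun i _ => by simpa using ((hpos l).1 i).le
          have h2 : 0 < dot (u l) (1 : Fin s → ℝ) := by
            obtain ⟨r⟩ := hsne
            refine Finset.sum_pos' (fun j _ => by simpa using ((hpos l).2 j).le)
              ⟨r, mem_univ r, by simpa using (hpos l).2 r⟩
          linarith
        · exact hxpos i)
    set q' : Pt m s := (fun i => x i - ε, fun r => y r + ε) with hq'
    have hq'T : q' ∈ TSet v u σ := by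
      refine ⟨fun l => ?_, fun i => ?_, fun r => ?_, ?_⟩
      · have hle := hεle (Sum.inl l)
        simp only [Sum.elim_inl] at hle
        have h1 : 0 ≤ dot (v l) (1 : Fin m → ℝ) :=
          Finset.sum_nonneg fun i _ => by simpa using ((hpos l).1 i).le
        have h2 : 0 < dot (u l) (1 : Fin s → ℝ) := by
          obtain ⟨r⟩ := hsne
          refine Finset.sum_pos' (fun j _ => by simpa using ((hpos l).2 j).le)
            ⟨r, mem_univ r, by simpa using (hpos l).2 r⟩
        have hmul : ε * (dot (v l) 1 + dot (u l) 1) ≤ dot (v l) x - dot (u l) y - σ l :=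
          (le_div_iff₀ (by linarith)).mp hle
        have e1 : dot (v l) q'.1 = dot (v l) x - ε * dot (v l) 1 := dot_sub_const _ _ _
        have e2 : dot (u l) q'.2 = dot (u l) y + ε * dot (u l) 1 := dot_add_const _ _ _
        rw [e1, e2]; nlinarith
      · have := hεle (Sum.inr i); simp only [Sum.elim_inr] at this
        simp only [hq']; linarith
      · have := hy0 r; simp only [hq']; linarith
      · obtain ⟨r⟩ := hsne
        intro hzero
        have : y r + ε = 0 := congrFun hzero r
        have := hy0 r
        linarith
    exact hw.2 q' (fun i => by simp only [hq']; linarith)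
      (fun r => by simp only [hq']; linarith) hq'T
  · rintro ⟨hT, ⟨i0, hi0⟩, hsl⟩
    obtain ⟨hP, hx0, hy0, hyne⟩ := hT
    have hsne : Nonempty (Fin s) := by
      by_contra h
      exact hyne (funext fun r => ((not_nonempty_iff.mp h).false r).elim)
    obtain ⟨r0⟩ := hsne
    constructor
    · refine ⟨⟨hP, hx0, hy0, hyne⟩, fun q h1 h2 hqT => ?_⟩
      have ha : 0 ≤ q.1 i0 := hqT.2.1 i0
      have hb : q.1 i0 < x i0 := h1 i0
      rw [hi0] at hb
      linarith
    · intro hS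
      obtain ⟨ε, hε, hεle⟩ := exists_eps
        (fun l : Fin L => (dot (v l) x - dot (u l) y - σ l) / dot (u l) 1)
        (by
          intro l
          apply div_pos (hsl l)
          refine Finset.sum_pos' (fun j _ => by simpa using ((hpos l).2 j).le)
            ⟨r0, mem_univ r0, by simpa using (hpos l).2 r0⟩)
      set q' : Pt m s := (x, fun r => y r + ε) with hq'
      have hq'T : q' ∈ TSet v u σ := by
        refine ⟨fun l => ?_, hx0, fun r => ?_, ?_⟩
        · have hle := hεle l
          have h2 : 0 < dot (u l) (1 : Fin s → ℝ) :=
            Finset.sum_pos' (fun j _ => by simpa using ((hpos l).2 j).le)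
              ⟨r0, mem_univ r0, by simpa using (hpos l).2 r0⟩
          have hmul : ε * dot (u l) 1 ≤ dot (v l) x - dot (u l) y - σ l :=
            (le_div_iff₀ h2).mp hle
          have e2 : dot (u l) q'.2 = dot (u l) y + ε * dot (u l) 1 := dot_add_const _ _ _
          simp only [hq'] at e2 ⊢
          rw [e2]; linarith
        · have := hy0 r; simp only [hq']; linarith
        · intro hzero
          have : y r0 + ε = 0 := congrFun hzero r0
          have := hy0 r0
          linarith
      have hne : q' ≠ (x, y) := by
        intro h
        have : y r0 + ε = y r0 := congrFun (congrArg Prod.snd h) r0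
        linarith
      exact hS.2 q' (fun i => le_refl _) (fun r => by simp only [hq']; linarith) hne hq'T
end
end

section
/- Let P = {(x,y) : v^l·x − u^l·y − σ^l ≥ 0, l = 1,…,L} with each (v^l,u^l) ∈ ℝ^{m+s} strictly positive, and T = P ∩ (ℝ^m_+ × (ℝ^s_+ \ {0})). For (x,y) ∈ T and r with y_r > 0, define φ^♮_r = min_{l=1,…,L} (v^l·x − Σ_{q≠r} u^l_q y_q − σ^l) / (u^l_r y_r). Then φ^♮_r ≥ 1, and the point (x, ((φ^♮_r − 1)e_r + 1_s) ⊗ y) belongs to the strongly efficient frontier ∂^s(T). -/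
noncomputable section

open Finset

lemma dot_le_dot {n : ℕ} {w a b : Fin n → ℝ} (hw : ∀ i, 0 ≤ w i)
    (h : ∀ i, a i ≤ b i) : dot w a ≤ dot w b :=
  Finset.sum_le_sum fun i _ => mul_le_mul_of_nonneg_left (h i) (hw i)

lemma dot_lt_dot {n : ℕ} {w a b : Fin n → ℝ} (hw : ∀ i, 0 < w i)
    (h : ∀ i, a i ≤ b i) (j : Fin n) (hj : a j < b j) : dot w a < dot w b :=
  Finset.sum_lt_sum (fun i _ => mul_le_mul_of_nonneg_left (h i) (hw i).le)
    ⟨j, Finset.mem_univ j, mul_lt_mul_of_pos_left hj (hw j)⟩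

/-- `φ♮_r ≥ 1` and the single-output-expanded target lies on `∂ˢ(T)`. -/
theorem stmt5 {m s L : ℕ} (hL : 0 < L)
    (v : Fin L → Fin m → ℝ) (u : Fin L → Fin s → ℝ) (σ : Fin L → ℝ)
    (hpos : ∀ l, (∀ i, 0 < v l i) ∧ (∀ r, 0 < u l r))
    (hσ : ∀ l, ∃ p ∈ polyP v u σ, dot (v l) p.1 - dot (u l) p.2 = σ l)
    (x : Fin m → ℝ) (y : Fin s → ℝ) (hxy : (x, y) ∈ TSet v u σ)
    (r : Fin s) (hyr : 0 < y r)
    (φn : ℝ)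
    (hφn : φn = sInf {t : ℝ | ∃ l : Fin L,
      t = (dot (v l) x - (∑ q ∈ Finset.univ.erase r, u l q * y q) - σ l) /
        (u l r * y r)}) :
    1 ≤ φn ∧ (x, Function.update y r (φn * y r)) ∈ strongF (TSet v u σ) := by

  obtain ⟨hP, hx0, hy0, hyne⟩ := hxy
  have hFL : Nonempty (Fin L) := ⟨⟨0, hL⟩⟩
  set g : Fin L → ℝ := fun l =>
    (dot (v l) x - (∑ q ∈ Finset.univ.erase r, u l q * y q) - σ l) /
      (u l r * y r) with hg
  have hS : {t : ℝ | ∃ l : Fin L,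
      t = (dot (v l) x - (∑ q ∈ Finset.univ.erase r, u l q * y q) - σ l) /
        (u l r * y r)} = Set.range g := by
    ext t; simp [hg, eq_comm]
  rw [hS] at hφn
  have hden : ∀ l, 0 < u l r * y r := fun l => mul_pos ((hpos l).2 r) hyr
  have hsplit : ∀ l, dot (u l) y = u l r * y r + ∑ q ∈ univ.erase r, u l q * y q := by
    intro l; rw [dot, ← Finset.add_sum_erase _ _ (mem_univ r)]
  have hg1 : ∀ l, 1 ≤ g l := by
    intro l
    rw [hg, le_div_iff₀ (hden l), one_mul]
    have h1 := hP l
    have h2 := hsplit l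
    simp only at h1
    linarith
  have hfin : (Set.range g).Finite := Set.finite_range g
  have hne : (Set.range g).Nonempty := Set.range_nonempty g
  have hφ1 : 1 ≤ φn := by
    rw [hφn]
    exact le_csInf hne (by rintro t ⟨l, rfl⟩; exact hg1 l)
  have hφle : ∀ l, φn ≤ g l := fun l => by
    rw [hφn]; exact csInf_le hfin.bddBelow ⟨l, rfl⟩
  obtain ⟨l₀, hl₀⟩ : φn ∈ Set.range g := hφn ▸ hne.csInf_mem hfin
  set c := φn * y r with hc
  have hcpos : 0 < c := mul_pos (lt_of_lt_of_le one_pos hφ1) hyr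
  set y' := Function.update y r c with hy'
  have hdot' : ∀ l, dot (u l) y' = u l r * c + ∑ q ∈ univ.erase r, u l q * y q := by
    intro l
    rw [dot, ← Finset.add_sum_erase _ _ (mem_univ r)]
    congr 1
    · simp [hy']
    · exact Finset.sum_congr rfl fun q hq => by
        rw [hy', Function.update_of_ne (Finset.ne_of_mem_erase hq)]
  have hslack : ∀ l, dot (v l) x - dot (u l) y' - σ l = (g l - φn) * (u l r * y r) := by
    intro l
    have hmul : g l * (u l r * y r)
        = dot (v l) x - (∑ q ∈ univ.erase r, u l q * y q) - σ l := by
      rw [hg]; field_simp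
      exact mul_div_cancel_right₀ _ ((hpos l).2 r).ne'
    rw [hdot' l, hc]
    linear_combination -hmul
  have hT' : (x, y') ∈ TSet v u σ := by
    refine ⟨fun l => ?_, hx0, fun q => ?_, ?_⟩
    · simp only
      rw [hslack l]
      exact mul_nonneg (sub_nonneg.2 (hφle l)) (hden l).le
    · by_cases h : q = r
      · subst h; simp [hy', hcpos.le]
      · show 0 ≤ Function.update y r c q
        rw [Function.update_of_ne h]; exact hy0 q
    · intro h
      have := congrFun h r
      simp [hy'] at this
      exact absurd this hcpos.ne'
  refine ⟨hφ1, hT', ?_⟩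
  rintro ⟨qx, qy⟩ hq1 hq2 hqne hqT
  simp only at hq1 hq2
  have hkey : dot (v l₀) qx - dot (u l₀) qy - σ l₀ < 0 := by
    have h0 : dot (v l₀) x - dot (u l₀) y' - σ l₀ = 0 := by
      rw [hslack l₀, hl₀]; ring
    have hvle : dot (v l₀) qx ≤ dot (v l₀) x :=
      dot_le_dot (fun i => ((hpos l₀).1 i).le) hq1
    have hule : dot (u l₀) y' ≤ dot (u l₀) qy :=
      dot_le_dot (fun i => ((hpos l₀).2 i).le) hq2
    have : qx ≠ x ∨ qy ≠ y' := by
      by_contra h; push_neg at h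
      exact hqne (Prod.ext h.1 h.2)
    rcases this with h | h
    · obtain ⟨j, hj⟩ := Function.ne_iff.1 h
      have : dot (v l₀) qx < dot (v l₀) x :=
        dot_lt_dot (hpos l₀).1 hq1 j (lt_of_le_of_ne (hq1 j) hj)
      linarith
    · obtain ⟨j, hj⟩ := Function.ne_iff.1 h
      have : dot (u l₀) y' < dot (u l₀) qy :=
        dot_lt_dot (hpos l₀).2 hq2 j (lt_of_le_of_ne (hq2 j) (Ne.symm hj))
      linarith
  exact absurd (hqT.1 l₀) (by simpa using not_le.2 hkey)
end
end

section
/- Let T be a production possibility set as above with ∂^s(P) = ∂^w(P), and for (x,y) ∈ T define the extended max Russell graph measure F̂(x,y;T) = max{ (1/(m+s))(Σ_i θ_i + Σ_r 1/φ_r) : (θ⊗x, φ⊗y) ∈ ∂^s(T), 0 ≤ θ ≤ 1_m, φ ≥ 1_s }. Then this maximum is attained (F̂ is well-defined) and F̂(x,y;T) > 1 − 1/(m+s). -/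
noncomputable section

open Finset

/-! ### Auxiliary lemmas -/

lemma dot_mono {n : ℕ} {v : Fin n → ℝ} (hv : ∀ i, 0 < v i) {a b : Fin n → ℝ}
    (h : ∀ i, a i ≤ b i) : dot v a ≤ dot v b :=
  Finset.sum_le_sum fun i _ => mul_le_mul_of_nonneg_left (h i) (hv i).le

lemma dot_strict_mono {n : ℕ} [NeZero n] {v : Fin n → ℝ} (hv : ∀ i, 0 < v i)
    {a b : Fin n → ℝ} (h : ∀ i, a i < b i) : dot v a < dot v b :=
  Finset.sum_lt_sum_of_nonempty univ_nonempty fun i _ =>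
    mul_lt_mul_of_pos_left (h i) (hv i)

lemma isClosed_polyP {m s L : ℕ} (v : Fin L → Fin m → ℝ) (u : Fin L → Fin s → ℝ)
    (σ : Fin L → ℝ) : IsClosed (polyP v u σ) := by
  have : polyP v u σ = ⋂ l, {p : Pt m s | 0 ≤ dot (v l) p.1 - dot (u l) p.2 - σ l} := by
    ext p; simp [polyP, Set.mem_iInter]
  rw [this]
  refine isClosed_iInter fun l => isClosed_le continuous_const ?_
  unfold dot
  fun_prop

lemma isClosed_weakF {m s : ℕ} {T : Set (Pt m s)} (hT : IsClosed T) :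
    IsClosed (weakF T) := by
  have hw : weakF T = T ∩ (⋃ q ∈ T,
      {p : Pt m s | (∀ i, q.1 i < p.1 i) ∧ ∀ r, p.2 r < q.2 r})ᶜ := by
    ext p
    simp only [weakF, Set.mem_setOf_eq, Set.mem_inter_iff, Set.mem_compl_iff,
      Set.mem_iUnion, not_exists]
    constructor
    · rintro ⟨h1, h2⟩
      exact ⟨h1, fun q hq ⟨ha, hb⟩ => h2 q ha hb hq⟩
    · rintro ⟨h1, h2⟩
      exact ⟨h1, fun q ha hb hq => h2 q hq ⟨ha, hb⟩⟩
  rw [hw]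
  refine hT.inter (IsOpen.isClosed_compl ?_)
  refine isOpen_iUnion fun q => isOpen_iUnion fun _ => ?_
  have : {p : Pt m s | (∀ i, q.1 i < p.1 i) ∧ ∀ r, p.2 r < q.2 r} =
      (⋂ i, {p : Pt m s | q.1 i < p.1 i}) ∩ (⋂ r, {p : Pt m s | p.2 r < q.2 r}) := by
    ext p; simp [Set.mem_iInter]
  rw [this]
  refine IsOpen.inter (isOpen_iInter_of_finite fun i => ?_)
    (isOpen_iInter_of_finite fun r => ?_)
  · exact isOpen_lt continuous_const ((continuous_apply i).comp continuous_fst)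
  · exact isOpen_lt ((continuous_apply r).comp continuous_snd) continuous_const

lemma tight_mem_weakF {m s L : ℕ} {v : Fin L → Fin m → ℝ} {u : Fin L → Fin s → ℝ}
    {σ : Fin L → ℝ} (hpos : ∀ l, (∀ i, 0 < v l i) ∧ (∀ r, 0 < u l r))
    [NeZero s] {p : Pt m s} (hp : p ∈ polyP v u σ) (l₀ : Fin L)
    (ht : dot (v l₀) p.1 - dot (u l₀) p.2 - σ l₀ = 0) :
    p ∈ weakF (polyP v u σ) := by
  refine ⟨hp, fun q h1 h2 hq => ?_⟩
  have hv : dot (v l₀) q.1 ≤ dot (v l₀) p.1 :=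
    dot_mono (hpos l₀).1 fun i => (h1 i).le
  have hu : dot (u l₀) p.2 < dot (u l₀) q.2 :=
    dot_strict_mono (hpos l₀).2 h2
  have := hq l₀
  linarith

lemma mem_strongF_TSet_iff {m s L : ℕ} {v : Fin L → Fin m → ℝ} {u : Fin L → Fin s → ℝ}
    {σ : Fin L → ℝ} (hpos : ∀ l, (∀ i, 0 < v l i) ∧ (∀ r, 0 < u l r))
    (hPfront : strongF (polyP v u σ) = weakF (polyP v u σ))
    {p : Pt m s} (hp : p ∈ TSet v u σ) :
    p ∈ strongF (TSet v u σ) ↔ p ∈ weakF (polyP v u σ) := by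
  obtain ⟨hpP, hp1, hp2, hpne⟩ := hp
  obtain ⟨r0, hr0⟩ : ∃ r, p.2 r ≠ 0 := Function.ne_iff.mp hpne
  have hr0' : 0 < p.2 r0 := lt_of_le_of_ne (hp2 r0) (Ne.symm hr0)
  constructor
  · intro hstr
    refine ⟨hpP, fun q h1 h2 hq => ?_⟩
    set q' : Pt m s := (fun i => max (q.1 i) 0, q.2) with hq'def
    have hq'P : q' ∈ polyP v u σ := by
      intro l
      have hv : dot (v l) q.1 ≤ dot (v l) (fun i => max (q.1 i) 0) :=
        dot_mono (hpos l).1 fun i => le_max_left _ _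
      have := hq l
      show 0 ≤ dot (v l) (fun i => max (q.1 i) 0) - dot (u l) q.2 - σ l
      linarith
    have hq2r0 : 0 < q.2 r0 := lt_of_le_of_lt (hp2 r0) (h2 r0)
    have hq'T : q' ∈ TSet v u σ := by
      refine ⟨hq'P, fun i => le_max_right _ _, fun r => le_trans (hp2 r) (h2 r).le, ?_⟩
      intro h0
      have : q.2 r0 = 0 := by
        have := congrFun h0 r0; simpa using this
      linarith
    refine hstr.2 q' (fun i => max_le (h1 i).le (hp1 i)) (fun r => (h2 r).le) ?_ hq'T
    intro h
    have : q.2 r0 = p.2 r0 := by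
      have := congrFun (congrArg Prod.snd h) r0; simpa using this
    linarith [h2 r0]
  · intro hw
    have hstrP : p ∈ strongF (polyP v u σ) := hPfront ▸ hw
    exact ⟨⟨hpP, hp1, hp2, hpne⟩, fun q h1 h2 hq hqT => hstrP.2 q h1 h2 hq hqT.1⟩

/-- the extended max Russell graph measure is well-defined (the maximum
is attained) and exceeds `1 − 1/(m+s)`. -/
theorem stmt7 {m s L : ℕ} (hms : 0 < m + s) (hL : 0 < L)
    (v : Fin L → Fin m → ℝ) (u : Fin L → Fin s → ℝ) (σ : Fin L → ℝ)
    (hpos : ∀ l, (∀ i, 0 < v l i) ∧ (∀ r, 0 < u l r))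
    (hσ : ∀ l, ∃ p ∈ polyP v u σ, dot (v l) p.1 - dot (u l) p.2 = σ l)
    (hPfront : strongF (polyP v u σ) = weakF (polyP v u σ))
    (x : Fin m → ℝ) (y : Fin s → ℝ) (hxy : (x, y) ∈ TSet v u σ) :
    ∃ g, IsGreatest {t : ℝ | ∃ (θ : Fin m → ℝ) (φ : Fin s → ℝ),
        (∀ i, 0 ≤ θ i ∧ θ i ≤ 1) ∧ (∀ r, 1 ≤ φ r) ∧
        ((fun i => θ i * x i), (fun r => φ r * y r)) ∈ strongF (TSet v u σ) ∧
        t = (1 / (m + s : ℝ)) * ((∑ i, θ i) + ∑ r, 1 / φ r)} g ∧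
      1 - 1 / (m + s : ℝ) < g := by
  obtain ⟨hP, hx0, hy0, hyne⟩ := hxy
  obtain ⟨r0, hr0⟩ : ∃ r, y r ≠ 0 := Function.ne_iff.mp hyne
  have hyr0 : 0 < y r0 := lt_of_le_of_ne (hy0 r0) (Ne.symm hr0)
  haveI : NeZero s := ⟨fun h => by subst h; exact Fin.elim0 r0⟩
  haveI : NeZero L := ⟨hL.ne'⟩
  have hs1 : 1 ≤ s := Nat.one_le_iff_ne_zero.mpr (NeZero.ne s)
  have hN : (0:ℝ) < (m : ℝ) + s := by
    have h1 : (1:ℝ) ≤ (s:ℝ) := by exact_mod_cast hs1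
    have h2 : (0:ℝ) ≤ (m:ℝ) := Nat.cast_nonneg m
    linarith
  -- the scaled-point map and the objective
  set G : Pt m s → Pt m s :=
    fun p => (fun i => p.1 i * x i, fun r => p.2 r * y r) with hGdef
  set val : Pt m s → ℝ :=
    fun p => (1 / (m + s : ℝ)) * ((∑ i, p.1 i) + ∑ r, 1 / p.2 r) with hvaldef
  -- membership in TSet for scaled points
  have hGT : ∀ θ : Fin m → ℝ, ∀ φ : Fin s → ℝ, (∀ i, 0 ≤ θ i) → (∀ r, 1 ≤ φ r) →
      (θ, φ) ∈ G ⁻¹' polyP v u σ → G (θ, φ) ∈ TSet v u σ := by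
    intro θ φ hθ hφ hpoly
    refine ⟨hpoly, fun i => mul_nonneg (hθ i) (hx0 i),
      fun r => mul_nonneg (le_trans zero_le_one (hφ r)) (hy0 r), ?_⟩
    intro h0
    have h := congrFun h0 r0
    simp only [hGdef, Pi.zero_apply] at h
    nlinarith [hφ r0]
  -- the equivalence between strong efficiency and weak P-efficiency for scaled points
  have hfeas_iff : ∀ θ : Fin m → ℝ, ∀ φ : Fin s → ℝ, (∀ i, 0 ≤ θ i) → (∀ r, 1 ≤ φ r) →
      (G (θ, φ) ∈ strongF (TSet v u σ) ↔ G (θ, φ) ∈ weakF (polyP v u σ)) := by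
    intro θ φ hθ hφ
    constructor
    · intro hstr
      exact (mem_strongF_TSet_iff hpos hPfront hstr.1).mp hstr
    · intro hw
      exact (mem_strongF_TSet_iff hpos hPfront (hGT θ φ hθ hφ hw.1)).mpr hw
  -- the exhibited feasible solution
  set c : Fin L → ℝ := fun l => dot (v l) x - dot (u l) y - σ l with hcdef
  have hc : ∀ l, 0 ≤ c l := fun l => hP l
  have hden : ∀ l, 0 < u l r0 * y r0 := fun l => mul_pos ((hpos l).2 r0) hyr0
  set d : Fin L → ℝ := fun l => c l / (u l r0 * y r0) with hddef
  have hd : ∀ l, 0 ≤ d l := fun l => div_nonneg (hc l) (hden l).le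
  set δ : ℝ := univ.inf' univ_nonempty d with hδdef
  have hδ0 : 0 ≤ δ := Finset.le_inf' _ _ fun l _ => hd l
  have hδle : ∀ l, δ ≤ d l := fun l => Finset.inf'_le _ (mem_univ l)
  obtain ⟨l₀, -, hl₀⟩ := Finset.exists_mem_eq_inf' (univ_nonempty) d
  set θ0 : Fin m → ℝ := fun _ => 1 with hθ0def
  set φ0 : Fin s → ℝ := fun r => if r = r0 then 1 + δ else 1 with hφ0def
  have hφ0ge : ∀ r, 1 ≤ φ0 r := by
    intro r; simp only [hφ0def]; split <;> linarith
  have hsum : ∀ w : Fin s → ℝ, (∑ r, w r * (φ0 r * y r)) = dot w y + δ * (w r0 * y r0) := by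
    intro w
    have h1 : ∀ r : Fin s, w r * (φ0 r * y r)
        = w r * y r + (if r = r0 then δ * (w r0 * y r0) else 0) := by
      intro r
      by_cases h : r = r0 <;> simp only [hφ0def, h, if_pos, if_true, if_neg, if_false] <;> ring
    rw [Finset.sum_congr rfl fun r _ => h1 r, Finset.sum_add_distrib,
      Finset.sum_ite_eq' univ r0]
    simp [dot]
  have hθ0x : (fun i => θ0 i * x i) = x := by
    funext i; simp [hθ0def]
  have hG0P : G (θ0, φ0) ∈ polyP v u σ := by
    intro l
    have h2 : dot (u l) (fun r => φ0 r * y r) = dot (u l) y + δ * (u l r0 * y r0) :=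
      hsum (u l)
    have h3 : δ * (u l r0 * y r0) ≤ c l := by
      have := hδle l
      rw [hddef] at this
      calc δ * (u l r0 * y r0) ≤ d l * (u l r0 * y r0) :=
            mul_le_mul_of_nonneg_right (hδle l) (hden l).le
        _ = c l := by
            simp only [hddef]
            exact div_mul_cancel₀ _ (hden l).ne'
    show 0 ≤ dot (v l) (fun i => θ0 i * x i) - dot (u l) (fun r => φ0 r * y r) - σ l
    rw [hθ0x, h2]
    have : c l = dot (v l) x - dot (u l) y - σ l := rfl
    linarith
  have hG0tight : dot (v l₀) (G (θ0, φ0)).1 - dot (u l₀) (G (θ0, φ0)).2 - σ l₀ = 0 := by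
    have h2 : dot (u l₀) (fun r => φ0 r * y r) = dot (u l₀) y + δ * (u l₀ r0 * y r0) :=
      hsum (u l₀)
    have h3 : δ * (u l₀ r0 * y r0) = c l₀ := by
      rw [hδdef, hl₀]
      simp only [hddef]
      exact div_mul_cancel₀ _ (hden l₀).ne'
    show dot (v l₀) (fun i => θ0 i * x i) - dot (u l₀) (fun r => φ0 r * y r) - σ l₀ = 0
    rw [hθ0x, h2]
    have : c l₀ = dot (v l₀) x - dot (u l₀) y - σ l₀ := rfl
    linarith
  have hG0w : G (θ0, φ0) ∈ weakF (polyP v u σ) :=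
    tight_mem_weakF hpos hG0P l₀ hG0tight
  have hG0str : G (θ0, φ0) ∈ strongF (TSet v u σ) :=
    (hfeas_iff θ0 φ0 (fun _ => zero_le_one) hφ0ge).mpr hG0w
  -- value of the exhibited solution
  have hval0 : val (θ0, φ0) = (1 / ((m:ℝ) + s)) * ((m : ℝ) + ((s : ℝ) + (1 / (1 + δ) - 1))) := by
    have h1 : (∑ i : Fin m, θ0 i) = (m : ℝ) := by simp [hθ0def]
    have h2 : (∑ r : Fin s, 1 / φ0 r) = (s : ℝ) + (1 / (1 + δ) - 1) := by
      have : ∀ r : Fin s, 1 / φ0 r = 1 + (if r = r0 then 1 / (1 + δ) - 1 else 0) := by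
        intro r
        by_cases h : r = r0 <;> simp [hφ0def, h]
      rw [Finset.sum_congr rfl fun r _ => this r, Finset.sum_add_distrib,
        Finset.sum_ite_eq' univ r0]
      simp [Finset.card_univ]
    simp only [hvaldef, h1, h2]
  have hval0gt : 1 - 1 / ((m:ℝ) + s) < val (θ0, φ0) := by
    rw [hval0]
    have he : 0 < 1 / (1 + δ) := by positivity
    have hkey : 1 / ((m:ℝ) + s) * ((m:ℝ) + ((s:ℝ) + (1 / (1 + δ) - 1)))
        = 1 - 1 / ((m:ℝ) + s) + (1 / (1 + δ)) / ((m:ℝ) + s) := by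
      field_simp
      ring
    rw [hkey]
    linarith [div_pos he hN]
  -- bounds for the feasible region
  set l1 : Fin L := ⟨0, hL⟩ with hl1def
  set B : ℝ := dot (v l1) x - σ l1 with hBdef
  set C : Fin s → ℝ := fun r => max 1 (B / (u l1 r * y r)) with hCdef
  have hbound : ∀ θ : Fin m → ℝ, ∀ φ : Fin s → ℝ, (∀ i, 0 ≤ θ i ∧ θ i ≤ 1) →
      (∀ r, 1 ≤ φ r) → G (θ, φ) ∈ polyP v u σ →
      ∀ r, y r ≠ 0 → φ r ≤ B / (u l1 r * y r) := by
    intro θ φ hθ hφ hpoly r hyr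
    have hyr' : 0 < y r := lt_of_le_of_ne (hy0 r) (Ne.symm hyr)
    have hdr : 0 < u l1 r * y r := mul_pos ((hpos l1).2 r) hyr'
    have h1 : dot (v l1) (fun i => θ i * x i) ≤ dot (v l1) x :=
      dot_mono (hpos l1).1 fun i => mul_le_of_le_one_left (hx0 i) (hθ i).2
    have h2 : u l1 r * (φ r * y r) ≤ dot (u l1) (fun t => φ t * y t) :=
      Finset.single_le_sum (f := fun t => u l1 t * (φ t * y t))
        (fun t _ => mul_nonneg ((hpos l1).2 t).le
          (mul_nonneg (le_trans zero_le_one (hφ t)) (hy0 t))) (mem_univ r)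
    have h3 := hpoly l1
    rw [le_div_iff₀ hdr]
    have h4 : φ r * (u l1 r * y r) = u l1 r * (φ r * y r) := by ring
    simp only [hGdef] at h3
    rw [h4]
    simp only [hBdef]
    linarith
  -- the compact search region
  set K : Set (Pt m s) := (Set.Icc (0 : Fin m → ℝ) 1) ×ˢ (Set.Icc (1 : Fin s → ℝ) C)
    with hKdef
  have hKcomp : IsCompact K := isCompact_Icc.prod isCompact_Icc
  have hGcont : Continuous G := by
    rw [hGdef]
    exact Continuous.prodMk
      (continuous_pi fun i => ((continuous_apply i).comp continuous_fst).mul continuous_const)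
      (continuous_pi fun r => ((continuous_apply r).comp continuous_snd).mul continuous_const)
  set F' : Set (Pt m s) := K ∩ G ⁻¹' (weakF (polyP v u σ)) with hF'def
  have hF'comp : IsCompact F' :=
    hKcomp.inter_right ((isClosed_weakF (isClosed_polyP v u σ)).preimage hGcont)
  -- facts about members of F'
  have hF'mem : ∀ p ∈ F', (∀ i, 0 ≤ p.1 i ∧ p.1 i ≤ 1) ∧ (∀ r, 1 ≤ p.2 r) := by
    rintro p ⟨hK, -⟩
    rw [hKdef, Set.mem_prod, Set.mem_Icc, Set.mem_Icc] at hK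
    exact ⟨fun i => ⟨hK.1.1 i, hK.1.2 i⟩, fun r => hK.2.1 r⟩
  -- continuity of the objective on F'
  have hvalcont : ContinuousOn val F' := by
    rw [hvaldef]
    refine ContinuousOn.mul continuousOn_const (ContinuousOn.add ?_ ?_)
    · exact (continuous_finset_sum _ fun i _ =>
        (continuous_apply i).comp continuous_fst).continuousOn
    · refine continuousOn_finset_sum _ fun r _ => ContinuousOn.div
        continuousOn_const ((continuous_apply r).comp continuous_snd).continuousOn ?_
      intro p hp
      have := (hF'mem p hp).2 r
      intro h
      rw [h] at this
      linarith
  -- (θ0, φ0) belongs to F'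
  have h00F' : (θ0, φ0) ∈ F' := by
    refine ⟨?_, hG0w⟩
    rw [hKdef, Set.mem_prod, Set.mem_Icc, Set.mem_Icc]
    refine ⟨⟨fun i => zero_le_one, fun i => le_refl 1⟩, hφ0ge, ?_⟩
    intro r
    by_cases h : r = r0
    · subst h
      have := hbound θ0 φ0 (fun i => ⟨zero_le_one, le_refl 1⟩) hφ0ge hG0P r hr0
      exact le_trans this (le_max_right _ _)
    · simp only [hφ0def, if_neg h, hCdef]
      exact le_max_left _ _
  -- take the maximizer
  obtain ⟨pstar, hpstarF', hmax⟩ := hF'comp.exists_isMaxOn ⟨(θ0, φ0), h00F'⟩ hvalcont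
  refine ⟨val pstar, ⟨?_, ?_⟩, lt_of_lt_of_le hval0gt (hmax h00F')⟩
  · -- val pstar belongs to the set
    obtain ⟨⟨hθb, hφb⟩⟩ := And.intro (hF'mem pstar hpstarF') True.intro
    refine ⟨pstar.1, pstar.2, hθb, hφb, ?_, rfl⟩
    have hw : G pstar ∈ weakF (polyP v u σ) := hpstarF'.2
    have := (hfeas_iff pstar.1 pstar.2 (fun i => (hθb i).1) hφb).mpr hw
    exact this
  · -- upper bound
    rintro t ⟨θ, φ, hθ, hφ, hstr, rfl⟩
    have hw : G (θ, φ) ∈ weakF (polyP v u σ) :=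
      (hfeas_iff θ φ (fun i => (hθ i).1) hφ).mp hstr
    set φ' : Fin s → ℝ := fun r => if y r = 0 then 1 else φ r with hφ'def
    have hφ'ge : ∀ r, 1 ≤ φ' r := by
      intro r; simp only [hφ'def]; split
      · exact le_refl 1
      · exact hφ r
    have hGeq : G (θ, φ') = G (θ, φ) := by
      simp only [hGdef]
      refine Prod.ext rfl ?_
      funext r
      by_cases h : y r = 0 <;> simp [hφ'def, h]
    have hmemF' : (θ, φ') ∈ F' := by
      refine ⟨?_, by rw [Set.mem_preimage, hGeq]; exact hw⟩
      rw [hKdef, Set.mem_prod, Set.mem_Icc, Set.mem_Icc]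
      refine ⟨⟨fun i => (hθ i).1, fun i => (hθ i).2⟩, hφ'ge, ?_⟩
      intro r
      by_cases h : y r = 0
      · simp only [hφ'def, if_pos h, hCdef]
        exact le_max_left _ _
      · simp only [hφ'def, if_neg h]
        exact le_trans (hbound θ φ hθ hφ hw.1 r h) (le_max_right _ _)
    have hle : (1 / ((m:ℝ) + s)) * ((∑ i, θ i) + ∑ r, 1 / φ r) ≤ val (θ, φ') := by
      rw [hvaldef]
      refine mul_le_mul_of_nonneg_left (add_le_add (le_refl _) ?_) (by positivity)
      refine Finset.sum_le_sum fun r _ => ?_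
      by_cases h : y r = 0
      · simp only [hφ'def, if_pos h, one_div_one]
        rw [div_le_one (by linarith [hφ r])]
        exact hφ r
      · simp only [hφ'def, if_neg h]
        exact le_refl _
    exact le_trans hle (hmax hmemF')
end
end

section
/- Let T be a PPS with ∂^s(P) = ∂^w(P) and F̂ the extended max Russell graph measure: F̂(x,y;T) = max{ (1/(m+s))(Σ_i θ_i + Σ_r 1/φ_r) : (θ⊗x, φ⊗y) ∈ ∂^s(T), 0 ≤ θ ≤ 1_m, φ ≥ 1_s }. Then for all (x,y) ∈ T, F̂(x,y;T) = 1 if and only if (x,y) ∈ ∂^s(T) (indication property). -/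
noncomputable section

open Finset

/-- indication property of the extended max Russell graph measure. -/
theorem stmt9 {m s L : ℕ} (hms : 0 < m + s)
    (v : Fin L → Fin m → ℝ) (u : Fin L → Fin s → ℝ) (σ : Fin L → ℝ)
    (hpos : ∀ l, (∀ i, 0 < v l i) ∧ (∀ r, 0 < u l r))
    (hσ : ∀ l, ∃ p ∈ polyP v u σ, dot (v l) p.1 - dot (u l) p.2 = σ l)
    (hPfront : strongF (polyP v u σ) = weakF (polyP v u σ))
    (x : Fin m → ℝ) (y : Fin s → ℝ) (hxy : (x, y) ∈ TSet v u σ)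
    (F : ℝ)
    (hF : IsGreatest {t : ℝ | ∃ (θ : Fin m → ℝ) (φ : Fin s → ℝ),
        (∀ i, 0 ≤ θ i ∧ θ i ≤ 1) ∧ (∀ r, 1 ≤ φ r) ∧
        ((fun i => θ i * x i), (fun r => φ r * y r)) ∈ strongF (TSet v u σ) ∧
        t = (1 / (m + s : ℝ)) * ((∑ i, θ i) + ∑ r, 1 / φ r)} F) :
    F = 1 ↔ (x, y) ∈ strongF (TSet v u σ) := by
  have hms' : (0:ℝ) < (m + s : ℝ) := by exact_mod_cast hms
  constructor
  · intro hF1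
    obtain ⟨θ, φ, hθ, hφ, hmem, ht⟩ := hF.1
    rw [hF1] at ht
    have hsum : (∑ i, θ i) + ∑ r, 1 / φ r = (m + s : ℝ) := by
      field_simp at ht
      linarith
    have hφpos : ∀ r, (0:ℝ) < φ r := fun r => lt_of_lt_of_le one_pos (hφ r)
    have hA : (0:ℝ) ≤ ∑ i, (1 - θ i) := Finset.sum_nonneg fun i _ => by
      linarith [(hθ i).2]
    have hB : (0:ℝ) ≤ ∑ r, (1 - 1 / φ r) := Finset.sum_nonneg fun r _ => by
      have : 1 / φ r ≤ 1 := by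
        rw [div_le_one (hφpos r)]; exact hφ r
      linarith
    have hAB : (∑ i, (1 - θ i)) + (∑ r, (1 - 1 / φ r)) = 0 := by
      simp only [Finset.sum_sub_distrib, Finset.sum_const, Finset.card_univ,
        Fintype.card_fin, nsmul_eq_mul, mul_one]
      push_cast
      linarith
    have hA0 : (∑ i, (1 - θ i)) = 0 := le_antisymm (by linarith) hA
    have hB0 : (∑ r, (1 - 1 / φ r)) = 0 := le_antisymm (by linarith) hB
    have hθ1 : ∀ i, θ i = 1 := by
      intro i
      have := (Finset.sum_eq_zero_iff_of_nonneg (fun i _ => by linarith [(hθ i).2])).mp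
        hA0 i (Finset.mem_univ i)
      linarith
    have hφ1 : ∀ r, φ r = 1 := by
      intro r
      have := (Finset.sum_eq_zero_iff_of_nonneg (fun r _ => by
        have : 1 / φ r ≤ 1 := by rw [div_le_one (hφpos r)]; exact hφ r
        linarith)).mp hB0 r (Finset.mem_univ r)
      have h1 : 1 / φ r = 1 := by linarith
      rw [div_eq_one_iff_eq (ne_of_gt (hφpos r))] at h1
      exact h1.symm
    have hx : (fun i => θ i * x i) = x := funext fun i => by rw [hθ1 i, one_mul]
    have hy : (fun r => φ r * y r) = y := funext fun r => by rw [hφ1 r, one_mul]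
    rw [hx, hy] at hmem
    exact hmem
  · intro hmem
    have h1 : (1:ℝ) ∈ {t : ℝ | ∃ (θ : Fin m → ℝ) (φ : Fin s → ℝ),
        (∀ i, 0 ≤ θ i ∧ θ i ≤ 1) ∧ (∀ r, 1 ≤ φ r) ∧
        ((fun i => θ i * x i), (fun r => φ r * y r)) ∈ strongF (TSet v u σ) ∧
        t = (1 / (m + s : ℝ)) * ((∑ i, θ i) + ∑ r, 1 / φ r)} := by
      refine ⟨fun _ => 1, fun _ => 1, fun i => ⟨zero_le_one, le_refl 1⟩,
        fun r => le_refl 1, by simpa using hmem, ?_⟩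
      simp only [Finset.sum_const, Finset.card_univ, Fintype.card_fin,
        nsmul_eq_mul, mul_one, one_div_one]
      field_simp
    have hle : (1:ℝ) ≤ F := hF.2 h1
    obtain ⟨θ, φ, hθ, hφ, _, ht⟩ := hF.1
    have hge : F ≤ 1 := by
      rw [ht]
      have hφpos : ∀ r, (0:ℝ) < φ r := fun r => lt_of_lt_of_le one_pos (hφ r)
      have h1 : (∑ i, θ i) ≤ (m:ℝ) := by
        calc (∑ i, θ i) ≤ ∑ _i : Fin m, (1:ℝ) :=
              Finset.sum_le_sum fun i _ => (hθ i).2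
          _ = (m:ℝ) := by simp
      have h2 : (∑ r, 1 / φ r) ≤ (s:ℝ) := by
        calc (∑ r, 1 / φ r) ≤ ∑ _r : Fin s, (1:ℝ) :=
              Finset.sum_le_sum fun r _ => by
                rw [div_le_one (hφpos r)]; exact hφ r
          _ = (s:ℝ) := by simp
      rw [div_mul_eq_mul_div, one_mul, div_le_one hms']
      push_cast
      linarith
    linarith
end
end

section
/- Under ∂^s(P) = ∂^w(P), for any (x,y) ∈ T the extended max Russell graph measure satisfies F̂(x,y;T) = max{ (m+s−1+θ*)/(m+s), (m+s−1+1/φ*)/(m+s) }, where φ* = min over r with y_r > 0 of max{φ_r : (x, φ⊗y) ∈ T, φ_q = 1 for all q ≠ r}, and θ* = max over i with x_i > 0 of min{θ_i : (θ⊗x, y) ∈ T, θ_q = 1 for all q ≠ i} (with θ* = 1/φ* if x = 0). -/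
noncomputable section

open Finset

open scoped Classical

/-- `φ* = min over r with y_r > 0 of max{φ_r : (x, φ⊗y) ∈ T, φ_q = 1 (q ≠ r)}`. -/
def phiStar {m s L : ℕ} (v : Fin L → Fin m → ℝ) (u : Fin L → Fin s → ℝ)
    (σ : Fin L → ℝ) (x : Fin m → ℝ) (y : Fin s → ℝ) : ℝ :=
  sInf ((fun r => sSup {c : ℝ |
      (x, Function.update y r (c * y r)) ∈ TSet v u σ}) '' {r | 0 < y r})

/-- `θ* = max over i with x_i > 0 of min{θ_i : (θ⊗x, y) ∈ T, θ_q = 1 (q ≠ i)}`,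
with `θ* = 1/φ*` when `x = 0`. -/
def thetaStar {m s L : ℕ} (v : Fin L → Fin m → ℝ) (u : Fin L → Fin s → ℝ)
    (σ : Fin L → ℝ) (x : Fin m → ℝ) (y : Fin s → ℝ) : ℝ :=
  if ∀ i, x i = 0 then 1 / phiStar v u σ x y
  else sSup ((fun i => sInf {c : ℝ |
      (Function.update x i (c * x i), y) ∈ TSet v u σ}) '' {i | 0 < x i})

namespace Stmt11Aux

lemma dot_update {n : ℕ} (w z : Fin n → ℝ) (j : Fin n) (t : ℝ) :
    dot w (Function.update z j t) = dot w z + w j * (t - z j) := by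
  classical
  unfold dot
  have h : ∀ i : Fin n, w i * Function.update z j t i
      = (if i = j then w j * t - w j * z j else 0) + w i * z i := by
    intro i
    by_cases h : i = j
    · subst h; simp
    · simp [Function.update_of_ne h, h]
  rw [Finset.sum_congr rfl fun i _ => h i, Finset.sum_add_distrib,
    Finset.sum_ite_eq' Finset.univ j]
  simp; ring

lemma dot_mono {n : ℕ} {w z z' : Fin n → ℝ} (hw : ∀ i, 0 ≤ w i)
    (h : ∀ i, z i ≤ z' i) : dot w z ≤ dot w z' :=
  Finset.sum_le_sum fun i _ => mul_le_mul_of_nonneg_left (h i) (hw i)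

lemma dot_strict_mono {n : ℕ} {w z z' : Fin n → ℝ} (hw : ∀ i, 0 < w i)
    (h : ∀ i, z i ≤ z' i) (hne : z ≠ z') : dot w z < dot w z' := by
  obtain ⟨j, hj⟩ := Function.ne_iff.mp hne
  exact Finset.sum_lt_sum
    (fun i _ => mul_le_mul_of_nonneg_left (h i) (hw i).le)
    ⟨j, Finset.mem_univ j, mul_lt_mul_of_pos_left (lt_of_le_of_ne (h j) hj) (hw j)⟩

/-- A point of `T` where some polyhedral constraint is tight is strongly efficient. -/
lemma tight_strong {m s L : ℕ} {v : Fin L → Fin m → ℝ} {u : Fin L → Fin s → ℝ}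
    {σ : Fin L → ℝ} (hpos : ∀ l, (∀ i, 0 < v l i) ∧ (∀ r, 0 < u l r))
    {z : Pt m s} (hz : z ∈ TSet v u σ) {l : Fin L}
    (ht : dot (v l) z.1 - dot (u l) z.2 - σ l = 0) :
    z ∈ strongF (TSet v u σ) := by
  refine ⟨hz, fun q hq1 hq2 hne hqT => ?_⟩
  have hne' : q.1 ≠ z.1 ∨ q.2 ≠ z.2 := by
    by_contra h; push_neg at h; exact hne (Prod.ext h.1 h.2)
  have hstrict : dot (v l) q.1 - dot (u l) q.2 < dot (v l) z.1 - dot (u l) z.2 := by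
    rcases hne' with h | h
    · have h1 : dot (v l) q.1 < dot (v l) z.1 := dot_strict_mono (hpos l).1 hq1 h
      have h2 : dot (u l) z.2 ≤ dot (u l) q.2 :=
        dot_mono (fun r => ((hpos l).2 r).le) hq2
      linarith
    · have h1 : dot (v l) q.1 ≤ dot (v l) z.1 :=
        dot_mono (fun i => ((hpos l).1 i).le) hq1
      have h2 : dot (u l) z.2 < dot (u l) q.2 :=
        dot_strict_mono (hpos l).2 hq2 (Ne.symm h)
      linarith
  have := hqT.1 l
  linarith

/-- A strongly efficient point of `T` has a tight polyhedral constraint. -/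
lemma strong_tight {m s L : ℕ} {v : Fin L → Fin m → ℝ} {u : Fin L → Fin s → ℝ}
    {σ : Fin L → ℝ} (hpos : ∀ l, (∀ i, 0 < v l i) ∧ (∀ r, 0 < u l r))
    (hL : 0 < L) {z : Pt m s}
    (hz : z ∈ strongF (TSet v u σ)) :
    ∃ l, dot (v l) z.1 - dot (u l) z.2 - σ l = 0 := by
  classical
  by_contra hc
  push_neg at hc
  have hsl : ∀ l, 0 < dot (v l) z.1 - dot (u l) z.2 - σ l := fun l =>
    lt_of_le_of_ne (hz.1.1 l) (Ne.symm (hc l))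
  obtain ⟨r0, hr0⟩ := Function.ne_iff.mp hz.1.2.2.2
  have hr0' : 0 < z.2 r0 := lt_of_le_of_ne (hz.1.2.2.1 r0) (by simpa using Ne.symm hr0)
  haveI : Nonempty (Fin L) := ⟨⟨0, hL⟩⟩
  have hupos : ∀ l : Fin L, 0 < ∑ r, u l r := fun l =>
    Finset.sum_pos' (fun r _ => ((hpos l).2 r).le) ⟨r0, Finset.mem_univ r0, (hpos l).2 r0⟩
  set ε := Finset.univ.inf' Finset.univ_nonempty
    (fun l => (dot (v l) z.1 - dot (u l) z.2 - σ l) / (∑ r, u l r)) with hε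
  have hεpos : 0 < ε := by
    rw [hε, Finset.lt_inf'_iff]
    exact fun l _ => div_pos (hsl l) (hupos l)
  have hd : ∀ l, dot (u l) (fun r => z.2 r + ε) = dot (u l) z.2 + ε * ∑ r, u l r := by
    intro l
    unfold dot
    rw [Finset.mul_sum, ← Finset.sum_add_distrib]
    exact Finset.sum_congr rfl fun r _ => by ring
  have hqT : (z.1, fun r => z.2 r + ε) ∈ TSet v u σ := by
    refine ⟨fun l => ?_, hz.1.2.1, fun r => by
        have := hz.1.2.2.1 r; simp only []; positivity, ?_⟩
    · have hle : ε ≤ (dot (v l) z.1 - dot (u l) z.2 - σ l) / (∑ r, u l r) :=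
        Finset.inf'_le _ (Finset.mem_univ l)
      have h2 := (le_div_iff₀ (hupos l)).1 hle
      simp only [hd l]
      linarith
    · intro h0
      have := congrFun h0 r0
      simp only [Pi.zero_apply] at this
      nlinarith
  exact hz.2 (z.1, fun r => z.2 r + ε) (fun i => le_refl _)
    (fun r => by simp only []; linarith [hεpos])
    (by
      intro h
      have h2 := congrFun (congrArg Prod.snd h) r0
      simp only [] at h2
      linarith) hqT



lemma core_ineq {m s : ℕ} (I : Finset (Fin m)) (R : Finset (Fin s)) (hR : R.Nonempty)
    (a : Fin m → ℝ) (b : Fin s → ℝ) (θ : Fin m → ℝ) (φ : Fin s → ℝ) (S M : ℝ)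
    (ha : ∀ i ∈ I, 0 < a i) (hb : ∀ r ∈ R, 0 < b r)
    (hθ0 : ∀ i ∈ I, 0 ≤ θ i) (hθ1 : ∀ i ∈ I, θ i ≤ 1) (hφ : ∀ r ∈ R, 1 ≤ φ r)
    (hS : 0 ≤ S) (hM : 0 < M)
    (heq : ∑ i ∈ I, a i * (1 - θ i) + ∑ r ∈ R, b r * (φ r - 1) = S)
    (hMa : ∀ i ∈ I, a i * (1 - M) ≤ S)
    (hMb : ∀ r ∈ R, b r * (1 - M) ≤ M * S) :
    ∑ i ∈ I, θ i + ∑ r ∈ R, (1 / φ r) ≤ (I.card : ℝ) + R.card - 1 + M := by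
  by_contra hcon
  push_neg at hcon
  have hαnn : ∀ i ∈ I, 0 ≤ 1 - θ i := fun i hi => by linarith [hθ1 i hi]
  have hβnn : ∀ r ∈ R, 0 ≤ 1 - 1 / φ r := fun r hr => by
    have h1 := hφ r hr
    have h2 : 1 / φ r ≤ 1 := by
      rw [div_le_one (by linarith)]; linarith
    linarith
  have hsum : ∑ i ∈ I, (1 - θ i) + ∑ r ∈ R, (1 - 1 / φ r) < 1 - M := by
    have h1 : ∑ i ∈ I, (1 - θ i) = (I.card : ℝ) - ∑ i ∈ I, θ i := by
      rw [Finset.sum_sub_distrib, Finset.sum_const, nsmul_eq_mul, mul_one]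
    have h2 : ∑ r ∈ R, (1 - 1 / φ r) = (R.card : ℝ) - ∑ r ∈ R, (1 / φ r) := by
      rw [Finset.sum_sub_distrib, Finset.sum_const, nsmul_eq_mul, mul_one]
    linarith
  have hM1 : M < 1 := by
    have h1 : (0:ℝ) ≤ ∑ i ∈ I, (1 - θ i) := Finset.sum_nonneg hαnn
    have h2 : (0:ℝ) ≤ ∑ r ∈ R, (1 - 1 / φ r) := Finset.sum_nonneg hβnn
    linarith
  rcases eq_or_lt_of_le hS with hS0 | hSpos
  · obtain ⟨r, hr⟩ := hR
    have h1 := hMb r hr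
    have h2 := hb r hr
    nlinarith
  · -- per-term bounds
    have keyA : ∀ i ∈ I, a i * (1 - θ i) ≤ S / (1 - M) * (1 - θ i) := by
      intro i hi
      have h1 : a i ≤ S / (1 - M) := (le_div_iff₀ (by linarith)).2 (hMa i hi)
      exact mul_le_mul_of_nonneg_right h1 (hαnn i hi)
    have keyB : ∀ r ∈ R, b r * (φ r - 1) ≤ S / (1 - M) * (1 - 1 / φ r) := by
      intro r hr
      have hφr := hφ r hr
      have hφpos : (0:ℝ) < φ r := by linarith
      have hβ : 1 - 1 / φ r < 1 - M := by
        have h2 : (1 - 1/φ r) ≤ ∑ r ∈ R, (1 - 1/φ r) :=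
          Finset.single_le_sum hβnn hr
        have h1 : (0:ℝ) ≤ ∑ i ∈ I, (1 - θ i) := Finset.sum_nonneg hαnn
        linarith
      have hφM : φ r < 1 / M := by
        rw [lt_div_iff₀ hM]
        have h1 : M < 1 / φ r := by linarith
        calc φ r * M < φ r * (1 / φ r) := by
              exact mul_lt_mul_of_pos_left h1 hφpos
          _ = 1 := by field_simp
      have hid : φ r - 1 = (1 - 1 / φ r) * φ r := by field_simp
      have hbM : b r / M ≤ S / (1 - M) :=
        (div_le_div_iff₀ hM (by linarith)).2 (by linarith [hMb r hr])
      calc b r * (φ r - 1) = b r * (1 - 1 / φ r) * φ r := by rw [hid]; ring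
        _ ≤ b r * (1 - 1 / φ r) * (1 / M) := by
            apply mul_le_mul_of_nonneg_left hφM.le
            exact mul_nonneg (hb r hr).le (hβnn r hr)
        _ = b r / M * (1 - 1 / φ r) := by ring
        _ ≤ S / (1 - M) * (1 - 1 / φ r) :=
            mul_le_mul_of_nonneg_right hbM (hβnn r hr)
    have hfin : S < S := by
      calc S = ∑ i ∈ I, a i * (1 - θ i) + ∑ r ∈ R, b r * (φ r - 1) := heq.symm
        _ ≤ S / (1 - M) * (∑ i ∈ I, (1 - θ i)) + S / (1 - M) * (∑ r ∈ R, (1 - 1/φ r)) := by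
            rw [Finset.mul_sum, Finset.mul_sum]
            exact add_le_add (Finset.sum_le_sum keyA) (Finset.sum_le_sum keyB)
        _ = S / (1 - M) * (∑ i ∈ I, (1 - θ i) + ∑ r ∈ R, (1 - 1/φ r)) := by ring
        _ < S / (1 - M) * (1 - M) :=
            mul_lt_mul_of_pos_left hsum (div_pos hSpos (by linarith))
        _ = S := div_mul_cancel₀ S (by linarith)
    exact absurd hfin (lt_irrefl S)



lemma phiStar_spec {m s L : ℕ} {v : Fin L → Fin m → ℝ} {u : Fin L → Fin s → ℝ}
    {σ : Fin L → ℝ} (hpos : ∀ l, (∀ i, 0 < v l i) ∧ (∀ r, 0 < u l r))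
    (hL : 0 < L) {x : Fin m → ℝ} {y : Fin s → ℝ} (hxy : (x, y) ∈ TSet v u σ) :
    (1 ≤ phiStar v u σ x y) ∧
    (∀ r, 0 < y r → ∀ l, (phiStar v u σ x y - 1) * (u l r * y r)
        ≤ dot (v l) x - dot (u l) y - σ l) ∧
    (∃ r, 0 < y r ∧ (x, Function.update y r (phiStar v u σ x y * y r)) ∈ TSet v u σ ∧
      ∃ l, dot (v l) x - dot (u l) (Function.update y r (phiStar v u σ x y * y r)) - σ l = 0) := by
  classical
  haveI : Nonempty (Fin L) := ⟨⟨0, hL⟩⟩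
  obtain ⟨hP, hx0, hy0, hyne⟩ := hxy
  obtain ⟨r0, hr0⟩ := Function.ne_iff.mp hyne
  have hr0' : 0 < y r0 := lt_of_le_of_ne (hy0 r0) (by simpa using Ne.symm hr0)
  set sl : Fin L → ℝ := fun l => dot (v l) x - dot (u l) y - σ l with hsl
  have hslnn : ∀ l, 0 ≤ sl l := hP
  set δ : Fin s → ℝ := fun r => 1 + Finset.univ.inf' Finset.univ_nonempty
    (fun l => sl l / (u l r * y r)) with hδ
  have hb : ∀ (r : Fin s) (l : Fin L), 0 < y r → 0 < u l r * y r := fun r l hr =>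
    mul_pos ((hpos l).2 r) hr
  have hδ1 : ∀ r, 0 < y r → 1 ≤ δ r := by
    intro r hr
    have : (0:ℝ) ≤ Finset.univ.inf' Finset.univ_nonempty (fun l => sl l / (u l r * y r)) :=
      Finset.le_inf' _ _ fun l _ => div_nonneg (hslnn l) (hb r l hr).le
    simp only [hδ]; linarith
  have hmem : ∀ r, 0 < y r → (x, Function.update y r (δ r * y r)) ∈ TSet v u σ := by
    intro r hr
    have hδr := hδ1 r hr
    refine ⟨fun l => ?_, hx0, fun q' => ?_, ?_⟩
    · have h1 : (δ r - 1) ≤ sl l / (u l r * y r) := by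
        simp only [hδ, add_sub_cancel_left]
        exact Finset.inf'_le _ (Finset.mem_univ l)
      have h2 : (δ r - 1) * (u l r * y r) ≤ sl l := by
        rw [← le_div_iff₀ (hb r l hr)]; exact h1
      have h3 : dot (u l) (Function.update y r (δ r * y r))
          = dot (u l) y + u l r * (δ r * y r - y r) := dot_update _ _ _ _
      simp only [h3]
      have : u l r * (δ r * y r - y r) = (δ r - 1) * (u l r * y r) := by ring
      rw [this]
      simp only [hsl] at h2
      linarith
    · dsimp only
      rcases eq_or_ne q' r with h | h
      · subst h; rw [Function.update_self]
        exact le_of_lt (mul_pos (by linarith) hr)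
      · rw [Function.update_of_ne h]; exact hy0 q'
    · dsimp only
      intro h0
      have h1 := congrFun h0 r
      rw [Function.update_self] at h1
      have h2 : (0:ℝ) < δ r * y r := mul_pos (by linarith) hr
      simp only [Pi.zero_apply] at h1
      linarith
  have hub : ∀ r, 0 < y r → ∀ c : ℝ,
      (x, Function.update y r (c * y r)) ∈ TSet v u σ → c ≤ δ r := by
    intro r hr c hc
    have h1 : ∀ l, c - 1 ≤ sl l / (u l r * y r) := by
      intro l
      have h2 := hc.1 l
      have h3 : dot (u l) (Function.update y r (c * y r))
          = dot (u l) y + u l r * (c * y r - y r) := dot_update _ _ _ _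
      rw [le_div_iff₀ (hb r l hr)]
      simp only [h3] at h2
      simp only [hsl]
      nlinarith
    have : c - 1 ≤ Finset.univ.inf' Finset.univ_nonempty (fun l => sl l / (u l r * y r)) :=
      Finset.le_inf' _ _ fun l _ => h1 l
    simp only [hδ]; linarith
  have hsup : ∀ r, 0 < y r →
      sSup {c : ℝ | (x, Function.update y r (c * y r)) ∈ TSet v u σ} = δ r := by
    intro r hr
    exact le_antisymm (csSup_le ⟨δ r, hmem r hr⟩ (fun c hc => hub r hr c hc))
      (le_csSup ⟨δ r, fun c hc => hub r hr c hc⟩ (hmem r hr))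
  have himg : phiStar v u σ x y = sInf (δ '' {r | 0 < y r}) := by
    unfold phiStar
    congr 1
    exact Set.image_congr fun r hr => hsup r hr
  have hfin : (δ '' {r | 0 < y r}).Finite := Set.Finite.image _ (Set.toFinite _)
  have hne : (δ '' {r | 0 < y r}).Nonempty := ⟨δ r0, r0, hr0', rfl⟩
  have hmemInf : phiStar v u σ x y ∈ δ '' {r | 0 < y r} := by
    rw [himg]; exact Set.Nonempty.csInf_mem hne hfin
  obtain ⟨rs, hrs, hrseq⟩ := hmemInf
  have hlow : ∀ r, 0 < y r → phiStar v u σ x y ≤ δ r := by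
    intro r hr
    rw [himg]
    exact csInf_le hfin.bddBelow ⟨r, hr, rfl⟩
  refine ⟨by rw [← hrseq]; exact hδ1 rs hrs, ?_, ?_⟩
  · intro r hr l
    have h1 : phiStar v u σ x y - 1 ≤ sl l / (u l r * y r) := by
      have h2 := hlow r hr
      have h3 : (δ r - 1) ≤ sl l / (u l r * y r) := by
        simp only [hδ, add_sub_cancel_left]
        exact Finset.inf'_le _ (Finset.mem_univ l)
      calc phiStar v u σ x y - 1 ≤ δ r - 1 := by linarith
        _ ≤ sl l / (u l r * y r) := h3
    rw [← le_div_iff₀ (hb r l hr)]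
    exact h1
  · refine ⟨rs, hrs, by rw [← hrseq]; exact hmem rs hrs, ?_⟩
    obtain ⟨lh, _, hlh⟩ := Finset.exists_mem_eq_inf' (Finset.univ_nonempty)
      (fun l => sl l / (u l rs * y rs))
    refine ⟨lh, ?_⟩
    have h3 : dot (u lh) (Function.update y rs (phiStar v u σ x y * y rs))
        = dot (u lh) y + u lh rs * (phiStar v u σ x y * y rs - y rs) := dot_update _ _ _ _
    have h4 : phiStar v u σ x y - 1 = sl lh / (u lh rs * y rs) := by
      rw [← hrseq]
      simp only [hδ, add_sub_cancel_left, hlh]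
    have h5 : (phiStar v u σ x y - 1) * (u lh rs * y rs) = sl lh := by
      rw [h4, div_mul_cancel₀ _ (ne_of_gt (hb rs lh hrs))]
    simp only [h3]
    simp only [hsl] at h5
    nlinarith [h5]



lemma thetaStar_spec {m s L : ℕ} {v : Fin L → Fin m → ℝ} {u : Fin L → Fin s → ℝ}
    {σ : Fin L → ℝ} (hpos : ∀ l, (∀ i, 0 < v l i) ∧ (∀ r, 0 < u l r))
    (hL : 0 < L) {x : Fin m → ℝ} {y : Fin s → ℝ} (hxy : (x, y) ∈ TSet v u σ)
    (hx : ¬ ∀ i, x i = 0) :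
    (0 ≤ thetaStar v u σ x y ∧ thetaStar v u σ x y ≤ 1) ∧
    (∀ i, 0 < x i → ∀ l, (1 - thetaStar v u σ x y) * (v l i * x i)
        ≤ dot (v l) x - dot (u l) y - σ l) ∧
    (thetaStar v u σ x y = 0 ∨
      ∃ i, 0 < x i ∧ (Function.update x i (thetaStar v u σ x y * x i), y) ∈ TSet v u σ ∧
        ∃ l, dot (v l) (Function.update x i (thetaStar v u σ x y * x i)) - dot (u l) y - σ l = 0) := by
  classical
  haveI : Nonempty (Fin L) := ⟨⟨0, hL⟩⟩
  obtain ⟨hP, hx0, hy0, hyne⟩ := hxy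
  push_neg at hx
  obtain ⟨i0, hi0x⟩ := hx
  have hi0 : 0 < x i0 := lt_of_le_of_ne (hx0 i0) (Ne.symm hi0x)
  set sl : Fin L → ℝ := fun l => dot (v l) x - dot (u l) y - σ l with hsl
  have hslnn : ∀ l, 0 ≤ sl l := hP
  set c : Fin m → ℝ := fun i => max 0 (Finset.univ.sup' Finset.univ_nonempty
    (fun l => 1 - sl l / (v l i * x i))) with hc
  have ha : ∀ (i : Fin m) (l : Fin L), 0 < x i → 0 < v l i * x i := fun i l hi =>
    mul_pos ((hpos l).1 i) hi
  have hc0 : ∀ i, 0 ≤ c i := fun i => le_max_left _ _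
  have hc1 : ∀ i, 0 < x i → c i ≤ 1 := by
    intro i hi
    apply max_le zero_le_one
    apply Finset.sup'_le
    intro l _
    have := div_nonneg (hslnn l) (ha i l hi).le
    linarith
  have hcsup : ∀ i, 0 < x i → ∀ l, 1 - sl l / (v l i * x i) ≤ c i := by
    intro i hi l
    exact le_trans (Finset.le_sup' (fun l => 1 - sl l / (v l i * x i))
      (Finset.mem_univ l)) (le_max_right _ _)
  have hmem : ∀ i, 0 < x i → (Function.update x i (c i * x i), y) ∈ TSet v u σ := by
    intro i hi
    refine ⟨fun l => ?_, fun j => ?_, hy0, hyne⟩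
    · have h3 : dot (v l) (Function.update x i (c i * x i))
          = dot (v l) x + v l i * (c i * x i - x i) := dot_update _ _ _ _
      dsimp only
      rw [h3]
      have h1 : 1 - sl l / (v l i * x i) ≤ c i := hcsup i hi l
      have h2 : (1 - c i) * (v l i * x i) ≤ sl l := by
        rw [← le_div_iff₀ (ha i l hi)]
        linarith
      simp only [hsl] at h2
      nlinarith
    · dsimp only
      rcases eq_or_ne j i with h | h
      · subst h; rw [Function.update_self]
        exact mul_nonneg (hc0 j) (hx0 j)
      · rw [Function.update_of_ne h]; exact hx0 j
  have hlb : ∀ i, 0 < x i → ∀ c' : ℝ,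
      (Function.update x i (c' * x i), y) ∈ TSet v u σ → c i ≤ c' := by
    intro i hi c' hc'
    apply max_le
    · have h8 := hc'.2.1 i
      dsimp only at h8
      rw [Function.update_self] at h8
      have h9 : (0:ℝ) * x i ≤ c' * x i := by linarith
      exact (mul_le_mul_iff_of_pos_right hi).1 h9
    · apply Finset.sup'_le
      intro l _
      have h2 := hc'.1 l
      have h3 : dot (v l) (Function.update x i (c' * x i))
          = dot (v l) x + v l i * (c' * x i - x i) := dot_update _ _ _ _
      rw [h3] at h2
      have h4 : (1 - c') * (v l i * x i) ≤ sl l := by simp only [hsl]; nlinarith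
      rw [← le_div_iff₀ (ha i l hi)] at h4
      linarith
  have hinf : ∀ i, 0 < x i →
      sInf {c' : ℝ | (Function.update x i (c' * x i), y) ∈ TSet v u σ} = c i := by
    intro i hi
    exact le_antisymm (csInf_le ⟨c i, fun c' hc' => hlb i hi c' hc'⟩ (hmem i hi))
      (le_csInf ⟨c i, hmem i hi⟩ (fun c' hc' => hlb i hi c' hc'))
  have himg : thetaStar v u σ x y = sSup (c '' {i | 0 < x i}) := by
    unfold thetaStar
    rw [if_neg (by push_neg; exact ⟨i0, ne_of_gt hi0⟩)]
    congr 1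
    exact Set.image_congr fun i hi => hinf i hi
  have hfin : (c '' {i | 0 < x i}).Finite := Set.Finite.image _ (Set.toFinite _)
  have hne : (c '' {i | 0 < x i}).Nonempty := ⟨c i0, i0, hi0, rfl⟩
  have hmemSup : thetaStar v u σ x y ∈ c '' {i | 0 < x i} := by
    rw [himg]; exact Set.Nonempty.csSup_mem hne hfin
  obtain ⟨is, his, hiseq⟩ := hmemSup
  have hhigh : ∀ i, 0 < x i → c i ≤ thetaStar v u σ x y := by
    intro i hi
    rw [himg]
    exact le_csSup hfin.bddAbove ⟨i, hi, rfl⟩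
  refine ⟨⟨by rw [← hiseq]; exact hc0 is, by rw [← hiseq]; exact hc1 is his⟩, ?_, ?_⟩
  · intro i hi l
    have h1 : 1 - sl l / (v l i * x i) ≤ thetaStar v u σ x y :=
      le_trans (hcsup i hi l) (hhigh i hi)
    rw [← le_div_iff₀ (ha i l hi)]
    simp only [hsl] at h1 ⊢
    linarith
  · rcases eq_or_lt_of_le (by rw [← hiseq]; exact hc0 is : (0:ℝ) ≤ thetaStar v u σ x y)
      with h0 | hpos'
    · exact Or.inl h0.symm
    · refine Or.inr ⟨is, his, by rw [← hiseq]; exact hmem is his, ?_⟩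
      have hcpos : 0 < c is := by rw [hiseq]; exact hpos'
      have hmax : c is = Finset.univ.sup' Finset.univ_nonempty
          (fun l => 1 - sl l / (v l is * x is)) := by
        rcases max_cases 0 (Finset.univ.sup' Finset.univ_nonempty
          (fun l => 1 - sl l / (v l is * x is))) with ⟨h1, h2⟩ | ⟨h1, h2⟩
        · exfalso; rw [hc] at hcpos; simp only at hcpos; rw [h1] at hcpos; exact lt_irrefl 0 hcpos
        · exact h1
      obtain ⟨lh, _, hlh⟩ := Finset.exists_mem_eq_sup' (Finset.univ_nonempty)
        (fun l => 1 - sl l / (v l is * x is))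
      refine ⟨lh, ?_⟩
      have h3 : dot (v lh) (Function.update x is (thetaStar v u σ x y * x is))
          = dot (v lh) x + v lh is * (thetaStar v u σ x y * x is - x is) := dot_update _ _ _ _
      have h4 : thetaStar v u σ x y = 1 - sl lh / (v lh is * x is) := by
        rw [← hiseq, hmax, hlh]
      have h5 : (1 - thetaStar v u σ x y) * (v lh is * x is) = sl lh := by
        rw [h4]
        have : (1 - (1 - sl lh / (v lh is * x is))) = sl lh / (v lh is * x is) := by ring
        rw [this, div_mul_cancel₀ _ (ne_of_gt (ha is lh his))]
      rw [h3]
      simp only [hsl] at h5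
      nlinarith
end Stmt11Aux

set_option maxHeartbeats 2000000
open Stmt11Aux

/-- closed form of the extended max Russell graph measure via
`m+s` one-dimensional (LP) problems. -/
theorem stmt11 {m s L : ℕ} (hms : 0 < m + s)
    (v : Fin L → Fin m → ℝ) (u : Fin L → Fin s → ℝ) (σ : Fin L → ℝ)
    (hpos : ∀ l, (∀ i, 0 < v l i) ∧ (∀ r, 0 < u l r))
    (hσ : ∀ l, ∃ p ∈ polyP v u σ, dot (v l) p.1 - dot (u l) p.2 = σ l)
    (hPfront : strongF (polyP v u σ) = weakF (polyP v u σ))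
    (x : Fin m → ℝ) (y : Fin s → ℝ) (hxy : (x, y) ∈ TSet v u σ)
    (F : ℝ)
    (hF : IsGreatest {t : ℝ | ∃ (θ : Fin m → ℝ) (φ : Fin s → ℝ),
        (∀ i, 0 ≤ θ i ∧ θ i ≤ 1) ∧ (∀ r, 1 ≤ φ r) ∧
        ((fun i => θ i * x i), (fun r => φ r * y r)) ∈ strongF (TSet v u σ) ∧
        t = (1 / (m + s : ℝ)) * ((∑ i, θ i) + ∑ r, 1 / φ r)} F) :
    F = max (((m + s : ℝ) - 1 + thetaStar v u σ x y) / (m + s : ℝ))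
            (((m + s : ℝ) - 1 + 1 / phiStar v u σ x y) / (m + s : ℝ)) := by
  classical
  have hx0 : ∀ i, 0 ≤ x i := hxy.2.1
  have hy0 : ∀ r, 0 ≤ y r := hxy.2.2.1
  obtain ⟨r0, hr0⟩ := Function.ne_iff.mp hxy.2.2.2
  have hr0' : 0 < y r0 := lt_of_le_of_ne (hy0 r0) (by simpa using Ne.symm hr0)
  -- kill the degenerate case L = 0
  rcases Nat.eq_zero_or_pos L with hL0 | hL
  · exfalso
    obtain ⟨θ, φ, hθ, hφ, heff, ht⟩ := hF.1
    have hz2 : ∀ r, 0 ≤ φ r * y r := heff.1.2.2.1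
    refine heff.2 ((fun i => θ i * x i), fun r => (φ r * y r) + 1)
      (fun i => le_refl _) (fun r => by dsimp only; linarith) ?_ ?_
    · intro h
      have h2 := congrFun (congrArg Prod.snd h) r0
      dsimp only at h2
      linarith
    · refine ⟨fun l => by exact absurd l.2 (by omega), heff.1.2.1,
        fun r => by dsimp only; linarith [hz2 r], ?_⟩
      intro h0
      have h2 := congrFun h0 r0
      dsimp only [Pi.zero_apply] at h2
      linarith [hz2 r0]
  -- main case
  set N : ℝ := ((m : ℝ) + s) with hNdef
  have hN : (0 : ℝ) < N := by
    have : (0:ℝ) < ((m + s : ℕ) : ℝ) := by exact_mod_cast hms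
    push_cast at this; linarith
  obtain ⟨hp1, hφ2, rs, hrs, hrsT, lB, hlB⟩ := phiStar_spec hpos hL hxy
  set pS := phiStar v u σ x y with hpSdef
  set tS := thetaStar v u σ x y with htSdef
  have hpS0 : (0:ℝ) < pS := lt_of_lt_of_le one_pos hp1
  have h1p : (0:ℝ) < 1 / pS := by positivity
  have h1p1 : 1 / pS ≤ 1 := by rw [div_le_one hpS0]; exact hp1
  -- theta facts valid in both cases
  have hth2 : ∀ i, 0 < x i → ∀ l, (1 - tS) * (v l i * x i)
      ≤ dot (v l) x - dot (u l) y - σ l := by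
    by_cases hx00 : ∀ i, x i = 0
    · intro i hi; exact absurd (hx00 i) (ne_of_gt hi)
    · exact (thetaStar_spec hpos hL hxy hx00).2.1
  have ht01 : 0 ≤ tS ∧ tS ≤ 1 := by
    by_cases hx00 : ∀ i, x i = 0
    · rw [htSdef]; unfold thetaStar; rw [if_pos hx00, ← hpSdef]
      exact ⟨h1p.le, h1p1⟩
    · exact (thetaStar_spec hpos hL hxy hx00).1
  set M := max tS (1 / pS) with hMdef
  have htM : tS ≤ M := le_max_left _ _
  have hpM : 1 / pS ≤ M := le_max_right _ _
  have hM0 : 0 < M := lt_of_lt_of_le h1p hpM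
  -- upper bound : F ≤ (N - 1 + M) / N
  have hupper : F ≤ (N - 1 + M) / N := by
    obtain ⟨θ, φ, hθ, hφ, heff, ht⟩ := hF.1
    obtain ⟨ls, hls⟩ := strong_tight hpos hL heff
    set S := dot (v ls) x - dot (u ls) y - σ ls with hSdef
    have hS0 : 0 ≤ S := hxy.1 ls
    set I := Finset.univ.filter (fun i => 0 < x i) with hIdef
    set R := Finset.univ.filter (fun r => 0 < y r) with hRdef
    have hmemI : ∀ i, i ∈ I ↔ 0 < x i := by
      intro i; rw [hIdef, Finset.mem_filter]; simp
    have hmemR : ∀ r, r ∈ R ↔ 0 < y r := by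
      intro r; rw [hRdef, Finset.mem_filter]; simp
    have heqI : ∑ i ∈ I, (v ls i * x i) * (1 - θ i) = ∑ i, (v ls i * x i) * (1 - θ i) := by
      apply Finset.sum_filter_of_ne
      intro i _ hne
      by_contra hxi
      have hx00 : x i = 0 := le_antisymm (not_lt.mp hxi) (hx0 i)
      exact hne (by rw [hx00]; ring)
    have heqR : ∑ r ∈ R, (u ls r * y r) * (φ r - 1) = ∑ r, (u ls r * y r) * (φ r - 1) := by
      apply Finset.sum_filter_of_ne
      intro r _ hne
      by_contra hyr
      have hy00 : y r = 0 := le_antisymm (not_lt.mp hyr) (hy0 r)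
      exact hne (by rw [hy00]; ring)
    have heq0 : ∑ i, (v ls i * x i) * (1 - θ i) + ∑ r, (u ls r * y r) * (φ r - 1) = S := by
      have e1 : ∑ i, (v ls i * x i) * (1 - θ i)
          = dot (v ls) x - dot (v ls) (fun i => θ i * x i) := by
        unfold dot; rw [← Finset.sum_sub_distrib]
        exact Finset.sum_congr rfl fun i _ => by ring
      have e2 : ∑ r, (u ls r * y r) * (φ r - 1)
          = dot (u ls) (fun r => φ r * y r) - dot (u ls) y := by
        unfold dot; rw [← Finset.sum_sub_distrib]
        exact Finset.sum_congr rfl fun r _ => by ring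
      rw [e1, e2, hSdef]
      linarith [hls]
    have heq : ∑ i ∈ I, (v ls i * x i) * (1 - θ i)
        + ∑ r ∈ R, (u ls r * y r) * (φ r - 1) = S := by
      rw [heqI, heqR]; exact heq0
    have hcore : ∑ i ∈ I, θ i + ∑ r ∈ R, (1 / φ r) ≤ (I.card : ℝ) + R.card - 1 + M := by
      refine core_ineq I R ⟨r0, (hmemR r0).2 hr0'⟩ (fun i => v ls i * x i) (fun r => u ls r * y r) θ φ S M
        (fun i hi => mul_pos ((hpos ls).1 i) ((hmemI i).1 hi))
        (fun r hr => mul_pos ((hpos ls).2 r) ((hmemR r).1 hr))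
        (fun i _ => (hθ i).1) (fun i _ => (hθ i).2) (fun r _ => hφ r)
        hS0 hM0 heq ?_ ?_
      · intro i hi
        have h1 := hth2 i ((hmemI i).1 hi) ls
        have h2 : (1 - M) * (v ls i * x i) ≤ (1 - tS) * (v ls i * x i) :=
          mul_le_mul_of_nonneg_right (by linarith)
            (mul_pos ((hpos ls).1 i) ((hmemI i).1 hi)).le
        show (v ls i * x i) * (1 - M) ≤ S
        rw [hSdef]; nlinarith
      · intro r hr
        have hb := mul_pos ((hpos ls).2 r) ((hmemR r).1 hr)
        have h1 := hφ2 r ((hmemR r).1 hr) ls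
        have k2 : 1 ≤ M * pS := by
          have := (div_le_iff₀ hpS0).1 hpM; linarith
        have k1 : M * ((pS - 1) * (u ls r * y r)) ≤ M * S :=
          mul_le_mul_of_nonneg_left (by rw [hSdef]; exact h1) hM0.le
        have k3 : u ls r * y r ≤ M * pS * (u ls r * y r) := by
          nlinarith
        show (u ls r * y r) * (1 - M) ≤ M * S
        nlinarith
    -- assemble full sums
    have hsplitθ : ∑ i, θ i = ∑ i ∈ I, θ i
        + ∑ i ∈ Finset.univ.filter (fun i => ¬ 0 < x i), θ i :=
      (Finset.sum_filter_add_sum_filter_not _ _ _).symm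
    have hsplitφ : ∑ r, (1 / φ r) = ∑ r ∈ R, (1 / φ r)
        + ∑ r ∈ Finset.univ.filter (fun r => ¬ 0 < y r), (1 / φ r) :=
      (Finset.sum_filter_add_sum_filter_not _ _ _).symm
    have hbound1 : ∑ i ∈ Finset.univ.filter (fun i => ¬ 0 < x i), θ i
        ≤ ((Finset.univ.filter (fun i => ¬ 0 < x i)).card : ℝ) := by
      calc ∑ i ∈ Finset.univ.filter (fun i => ¬ 0 < x i), θ i
          ≤ ∑ i ∈ Finset.univ.filter (fun i => ¬ 0 < x i), (1:ℝ) :=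
            Finset.sum_le_sum fun i _ => (hθ i).2
        _ = _ := by rw [Finset.sum_const, nsmul_eq_mul, mul_one]
    have hbound2 : ∑ r ∈ Finset.univ.filter (fun r => ¬ 0 < y r), (1 / φ r)
        ≤ ((Finset.univ.filter (fun r => ¬ 0 < y r)).card : ℝ) := by
      calc ∑ r ∈ Finset.univ.filter (fun r => ¬ 0 < y r), (1 / φ r)
          ≤ ∑ r ∈ Finset.univ.filter (fun r => ¬ 0 < y r), (1:ℝ) :=
            Finset.sum_le_sum fun r _ => by
              rw [div_le_one (by linarith [hφ r])]; linarith [hφ r]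
        _ = _ := by rw [Finset.sum_const, nsmul_eq_mul, mul_one]
    have hcard1 : (I.card : ℝ) + ((Finset.univ.filter (fun i => ¬ 0 < x i)).card : ℝ)
        = (m : ℝ) := by
      have hnat := Finset.card_filter_add_card_filter_not
        (s := (Finset.univ : Finset (Fin m))) (p := fun i => 0 < x i)
      rw [Finset.card_univ, Fintype.card_fin] at hnat
      rw [hIdef]
      exact_mod_cast hnat
    have hcard2 : (R.card : ℝ) + ((Finset.univ.filter (fun r => ¬ 0 < y r)).card : ℝ)
        = (s : ℝ) := by
      have hnat := Finset.card_filter_add_card_filter_not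
        (s := (Finset.univ : Finset (Fin s))) (p := fun r => 0 < y r)
      rw [Finset.card_univ, Fintype.card_fin] at hnat
      rw [hRdef]
      exact_mod_cast hnat
    have htotal : ∑ i, θ i + ∑ r, (1 / φ r) ≤ N - 1 + M := by
      rw [hsplitθ, hsplitφ, hNdef]
      linarith [hcore, hbound1, hbound2, hcard1, hcard2]
    rw [ht]
    calc (1 / N) * ((∑ i, θ i) + ∑ r, 1 / φ r) ≤ (1 / N) * (N - 1 + M) := by
          apply mul_le_mul_of_nonneg_left htotal (by positivity)
      _ = (N - 1 + M) / N := by ring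
  -- lower bound pieces
  have hBle : (N - 1 + 1 / pS) / N ≤ F := by
    apply hF.2
    refine ⟨fun _ => 1, Function.update (fun _ => (1:ℝ)) rs pS,
      fun i => ⟨zero_le_one, le_refl 1⟩, ?_, ?_, ?_⟩
    · intro r
      rcases eq_or_ne r rs with h | h
      · subst h; rw [Function.update_self]; exact hp1
      · rw [Function.update_of_ne h]
    · have hpair : ((fun i => (1:ℝ) * x i),
          (fun r => Function.update (fun _ => (1:ℝ)) rs pS r * y r))
          = ((x, Function.update y rs (pS * y rs)) : Pt m s) := by
        refine Prod.ext (funext fun i => one_mul _) (funext fun r => ?_)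
        dsimp only
        rcases eq_or_ne r rs with h | h
        · subst h; rw [Function.update_self, Function.update_self]
        · rw [Function.update_of_ne h, Function.update_of_ne h, one_mul]
      rw [hpair]
      exact tight_strong hpos hrsT hlB
    · have e1 : ∑ i : Fin m, (1:ℝ) = (m : ℝ) := by
        rw [Finset.sum_const, nsmul_eq_mul, mul_one, Finset.card_univ, Fintype.card_fin]
      have e2 : ∑ r : Fin s, 1 / Function.update (fun _ => (1:ℝ)) rs pS r
          = 1 / pS + ((s : ℝ) - 1) := by
        have hfun : (fun r => 1 / Function.update (fun _ => (1:ℝ)) rs pS r)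
            = Function.update (fun _ => (1:ℝ)) rs (1 / pS) := by
          funext r
          rcases eq_or_ne r rs with h | h
          · subst h; rw [Function.update_self, Function.update_self]
          · rw [Function.update_of_ne h, Function.update_of_ne h, one_div_one]
        calc ∑ r : Fin s, 1 / Function.update (fun _ => (1:ℝ)) rs pS r
            = ∑ r : Fin s, Function.update (fun _ => (1:ℝ)) rs (1 / pS) r := by
              rw [hfun]
          _ = 1 / pS + ∑ _r ∈ Finset.univ \ {rs}, (1:ℝ) :=
              Finset.sum_update_of_mem (Finset.mem_univ rs) _ _
          _ = 1 / pS + ((s:ℝ) - 1) := by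
              rw [Finset.sdiff_singleton_eq_erase, Finset.sum_const, nsmul_eq_mul, mul_one,
                Finset.card_erase_of_mem (Finset.mem_univ rs), Finset.card_univ,
                Fintype.card_fin]
              have hs1 : 1 ≤ s := rs.pos
              rw [Nat.cast_sub hs1, Nat.cast_one]
      have hNne : N ≠ 0 := ne_of_gt hN
      dsimp only
      rw [e1, e2]
      field_simp
      ring
  have hAle : (N - 1 + tS) / N ≤ F := by
    by_cases hx00 : ∀ i, x i = 0
    · have : tS = 1 / pS := by
        rw [htSdef]; unfold thetaStar; rw [if_pos hx00, ← hpSdef]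
      rw [this]; exact hBle
    · rcases (thetaStar_spec hpos hL hxy hx00).2.2 with h0 | ⟨is, his, hisT, lA, hlA⟩
      · have h0' : tS = 0 := h0
        have hstep : (N - 1 + tS) / N ≤ (N - 1 + 1 / pS) / N := by
          apply (div_le_div_iff_of_pos_right hN).2
          rw [h0']; linarith
        exact le_trans hstep hBle
      · apply hF.2
        refine ⟨Function.update (fun _ => (1:ℝ)) is tS, fun _ => 1, ?_,
          fun r => le_refl 1, ?_, ?_⟩
        · intro i
          rcases eq_or_ne i is with h | h
          · subst h; rw [Function.update_self]; exact ht01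
          · rw [Function.update_of_ne h]; exact ⟨zero_le_one, le_refl 1⟩
        · have hpair : ((fun i => Function.update (fun _ => (1:ℝ)) is tS i * x i),
              (fun r => (1:ℝ) * y r))
              = ((Function.update x is (tS * x is), y) : Pt m s) := by
            refine Prod.ext (funext fun i => ?_) (funext fun r => one_mul _)
            dsimp only
            rcases eq_or_ne i is with h | h
            · subst h; rw [Function.update_self, Function.update_self]
            · rw [Function.update_of_ne h, Function.update_of_ne h, one_mul]
          rw [hpair]
          exact tight_strong hpos hisT hlA
        · have e1 : ∑ r : Fin s, 1 / (1:ℝ) = (s : ℝ) := by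
            rw [one_div_one, Finset.sum_const, nsmul_eq_mul, mul_one,
              Finset.card_univ, Fintype.card_fin]
          have e2 : ∑ i : Fin m, Function.update (fun _ => (1:ℝ)) is tS i
              = tS + ((m : ℝ) - 1) := by
            calc ∑ i : Fin m, Function.update (fun _ => (1:ℝ)) is tS i
                = tS + ∑ _i ∈ Finset.univ \ {is}, (1:ℝ) :=
                Finset.sum_update_of_mem (Finset.mem_univ is) _ _
              _ = tS + ((m:ℝ) - 1) := by
                rw [Finset.sdiff_singleton_eq_erase, Finset.sum_const, nsmul_eq_mul, mul_one,
                  Finset.card_erase_of_mem (Finset.mem_univ is), Finset.card_univ,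
                  Fintype.card_fin]
                have hm1 : 1 ≤ m := is.pos
                rw [Nat.cast_sub hm1, Nat.cast_one]
          have hNne : N ≠ 0 := ne_of_gt hN
          dsimp only
          rw [e1, e2]
          field_simp
          ring
  have hmaxM : max ((N - 1 + tS) / N) ((N - 1 + 1 / pS) / N) = (N - 1 + M) / N := by
    rw [hMdef]
    rcases le_total tS (1 / pS) with h | h
    · rw [max_eq_right h, max_eq_right ((div_le_div_iff_of_pos_right hN).2 (by linarith))]
    · rw [max_eq_left h, max_eq_left ((div_le_div_iff_of_pos_right hN).2 (by linarith))]
  rw [hmaxM]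
  exact le_antisymm hupper (by rw [← hmaxM]; exact max_le hAle hBle)
end
end

section
/- Define P = {(x,y) : Σ_j λ_j x_j + R⁻π ≤ x, Σ_j λ_j y_j + R⁺π ≥ y, Σ_j λ_j = 1, λ ≥ 0, π ≥ 0 for some λ ∈ ℝ^n, π ∈ ℝ^K} and W = {(v,u,σ) : v·1_m + u·1_s = 1, v·x_j − u·y_j − σ ≥ 0 for j = 1,…,n, vR⁻ − uR⁺ ≥ 0, v ≥ 0, u ≥ 0}. Then P = {(x,y) : v·x − u·y ≥ σ for all (v,u,σ) ∈ W}. -/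
noncomputable section

open Finset

/-- The trade-offs production set
`P = {(x,y) : Σλⱼxⱼ + R⁻π ≤ x, Σλⱼyⱼ + R⁺π ≥ y, Σλⱼ = 1, λ ≥ 0, π ≥ 0}`. -/
def Pcons {m s n K : ℕ} (X : Fin n → Fin m → ℝ) (Y : Fin n → Fin s → ℝ)
    (Rm : Fin m → Fin K → ℝ) (Rp : Fin s → Fin K → ℝ) : Set (Pt m s) :=
  {p | ∃ (lam : Fin n → ℝ) (π : Fin K → ℝ),
    (∀ j, 0 ≤ lam j) ∧ (∀ t, 0 ≤ π t) ∧ (∑ j, lam j) = 1 ∧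
    (∀ i, (∑ j, lam j * X j i) + (∑ t, Rm i t * π t) ≤ p.1 i) ∧
    (∀ r, p.2 r ≤ (∑ j, lam j * Y j r) + ∑ t, Rp r t * π t)}

/-- The multiplier set `W`. -/
def Wset {m s n K : ℕ} (X : Fin n → Fin m → ℝ) (Y : Fin n → Fin s → ℝ)
    (Rm : Fin m → Fin K → ℝ) (Rp : Fin s → Fin K → ℝ) :
    Set ((Fin m → ℝ) × (Fin s → ℝ) × ℝ) :=
  {w | (∑ i, w.1 i) + (∑ r, w.2.1 r) = 1 ∧
    (∀ j, 0 ≤ dot w.1 (X j) - dot w.2.1 (Y j) - w.2.2) ∧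
    (∀ t, 0 ≤ (∑ i, w.1 i * Rm i t) - ∑ r, w.2.1 r * Rp r t) ∧
    (∀ i, 0 ≤ w.1 i) ∧ (∀ r, 0 ≤ w.2.1 r)}


set_option linter.unusedSectionVars false
set_option maxHeartbeats 1000000

section FarkasAux


section FarkasDev
variable {ι κ : Type*} [Fintype ι] [Fintype κ] [DecidableEq ι]

lemma sum_smul_apply (g : ι → EuclideanSpace ℝ κ) (c : ι → ℝ) (p : κ) (t : Finset ι) :
    (∑ i ∈ t, c i • g i) p = ∑ i ∈ t, c i * g i p := by
  have := map_sum (EuclideanSpace.proj p (𝕜 := ℝ)) (fun i => c i • g i) t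
  simp only [map_smul, smul_eq_mul, PiLp.proj_apply] at this
  exact this

/-- Conic Carathéodory. -/
lemma cara_aux (g : ι → EuclideanSpace ℝ κ) :
    ∀ (N : ℕ) (t : Finset ι), t.card ≤ N → ∀ (c : ι → ℝ), (∀ i, 0 ≤ c i) →
    ∃ (t' : Finset ι) (c' : ι → ℝ), LinearIndependent ℝ (fun i : t' => g i) ∧
      (∀ i, 0 ≤ c' i) ∧ ∑ i ∈ t', c' i • g i = ∑ i ∈ t, c i • g i := by
  intro N
  induction N with
  | zero =>
    intro t ht c hc
    rw [Nat.le_zero, Finset.card_eq_zero] at ht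
    subst ht
    haveI : IsEmpty {x // x ∈ (∅ : Finset ι)} := ⟨fun x => absurd x.2 (Finset.notMem_empty _)⟩
    exact ⟨∅, c, linearIndependent_empty_type, hc, rfl⟩
  | succ N ih =>
    intro t ht c hc
    by_cases hLI : LinearIndependent ℝ (fun i : t => g i)
    · exact ⟨t, c, hLI, hc, rfl⟩
    · obtain ⟨f, hfsum, i₀, hfi₀⟩ := Fintype.not_linearIndependent_iff.1 hLI
      -- make a relation with a positive entry
      set f' : {x // x ∈ t} → ℝ := if 0 < f i₀ then f else -f with hf'
      have hf'sum : ∑ i, f' i • g i = 0 := by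
        by_cases h : 0 < f i₀
        · simpa [hf', h] using hfsum
        · simp only [hf', h, if_false]
          simp only [Pi.neg_apply, neg_smul, Finset.sum_neg_distrib]
          simpa using congrArg Neg.neg hfsum
      have hf'pos : 0 < f' i₀ := by
        by_cases h : 0 < f i₀
        · simpa [hf', h]
        · have : f i₀ < 0 := lt_of_le_of_ne (not_lt.1 h) hfi₀
          simp [hf', h]
          linarith
      -- extend to d : ι → ℝ
      set d : ι → ℝ := fun i => if h : i ∈ t then f' ⟨i, h⟩ else 0 with hd
      have hdsum : ∑ i ∈ t, d i • g i = 0 := by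
        rw [← Finset.sum_attach t (fun i => d i • g i)]
        rw [← hf'sum]
        apply Finset.sum_congr rfl
        intro i _
        simp [hd, i.2]
      have hdpos : 0 < d i₀.1 := by simp [hd, i₀.2, hf'pos]
      -- minimum ratio
      set P := t.filter (fun i => 0 < d i) with hP
      have hPne : P.Nonempty := ⟨i₀.1, Finset.mem_filter.2 ⟨i₀.2, hdpos⟩⟩
      obtain ⟨i₁, hi₁P, hi₁min⟩ := Finset.exists_min_image P (fun i => c i / d i) hPne
      have hi₁t : i₁ ∈ t := (Finset.mem_filter.1 hi₁P).1
      have hdi₁ : 0 < d i₁ := (Finset.mem_filter.1 hi₁P).2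
      set ρ := c i₁ / d i₁ with hρ
      have hρ0 : 0 ≤ ρ := div_nonneg (hc i₁) hdi₁.le
      set c' : ι → ℝ := fun i => c i - ρ * d i with hc'
      have hc'0 : ∀ i, 0 ≤ c' i := by
        intro i
        by_cases hit : i ∈ t
        · by_cases hdi : 0 < d i
          · have h2 := (le_div_iff₀ hdi).1 (hi₁min i (Finset.mem_filter.2 ⟨hit, hdi⟩))
            simp only [hc']
            linarith
          · simp only [hc']
            nlinarith [hc i, not_lt.1 hdi]
        · simp [hc', hd, hit, hc i]
      have hc'i₁ : c' i₁ = 0 := by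
        simp [hc', hρ]
        field_simp
        ring
      have hsum' : ∑ i ∈ t, c' i • g i = ∑ i ∈ t, c i • g i := by
        simp only [hc', sub_smul, mul_smul, Finset.sum_sub_distrib]
        rw [← Finset.smul_sum, hdsum, smul_zero, sub_zero]
      have hsum'' : ∑ i ∈ t.erase i₁, c' i • g i = ∑ i ∈ t, c i • g i := by
        rw [← hsum', ← Finset.add_sum_erase t _ hi₁t, hc'i₁]
        simp
      have hcard : (t.erase i₁).card ≤ N := by
        have := Finset.card_erase_of_mem hi₁t
        omega
      obtain ⟨t', c'', h1, h2, h3⟩ := ih (t.erase i₁) hcard c' hc'0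
      exact ⟨t', c'', h1, h2, h3.trans hsum''⟩
end FarkasDev

section F2
variable {ι κ : Type*} [Fintype ι] [Fintype κ] [DecidableEq ι]

def coneSet (g : ι → EuclideanSpace ℝ κ) : Set (EuclideanSpace ℝ κ) :=
  {x | ∃ c : ι → ℝ, (∀ i, 0 ≤ c i) ∧ x = ∑ i, c i • g i}

def pieceSet (g : ι → EuclideanSpace ℝ κ) (t : Finset ι) : Set (EuclideanSpace ℝ κ) :=
  {x | ∃ c : ι → ℝ, (∀ i, 0 ≤ c i) ∧ x = ∑ i ∈ t, c i • g i}

lemma pieceSet_isClosed (g : ι → EuclideanSpace ℝ κ) (t : Finset ι)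
    (hLI : LinearIndependent ℝ (fun i : t => g i)) : IsClosed (pieceSet g t) := by
  classical
  let T : ({x // x ∈ t} → ℝ) →ₗ[ℝ] EuclideanSpace ℝ κ :=
    { toFun := fun c => ∑ i, c i • g i.1
      map_add' := by intro a b; simp [add_smul, Finset.sum_add_distrib]
      map_smul' := by intro r a; simp [smul_smul, Finset.smul_sum] }
  have hker : LinearMap.ker T = ⊥ := by
    rw [LinearMap.ker_eq_bot']
    intro c hc
    have := Fintype.linearIndependent_iff.1 hLI c hc
    funext i; exact this i
  have hemb := LinearMap.isClosedEmbedding_of_injective hker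
  have hclosed : IsClosed {c : {x // x ∈ t} → ℝ | ∀ i, 0 ≤ c i} := by
    have : {c : {x // x ∈ t} → ℝ | ∀ i, 0 ≤ c i} = ⋂ i, {c | 0 ≤ c i} := by
      ext c; simp [Set.mem_iInter]
    rw [this]
    exact isClosed_iInter fun i => isClosed_le continuous_const (continuous_apply i)
  have himg : pieceSet g t = T '' {c | ∀ i, 0 ≤ c i} := by
    ext x
    constructor
    · rintro ⟨c, hc, rfl⟩
      refine ⟨fun i => c i.1, fun i => hc i.1, ?_⟩
      show ∑ i : {x // x ∈ t}, c i.1 • g i.1 = _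
      rw [Finset.sum_coe_sort t (fun i => c i • g i)]
    · rintro ⟨c, hc, rfl⟩
      refine ⟨fun i => if h : i ∈ t then c ⟨i, h⟩ else 0, ?_, ?_⟩
      · intro i
        by_cases h : i ∈ t
        · simpa [h] using hc ⟨i, h⟩
        · simp [h]
      · show _ = ∑ i ∈ t, _
        rw [← Finset.sum_coe_sort t]
        apply Finset.sum_congr rfl
        intro i _
        simp [i.2]
  rw [himg]
  exact hemb.isClosedMap _ hclosed

lemma coneSet_eq_iUnion (g : ι → EuclideanSpace ℝ κ) :
    coneSet g = ⋃ (t : {t : Finset ι // LinearIndependent ℝ (fun i : t => g i)}),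
      pieceSet g t.1 := by
  ext x
  constructor
  · rintro ⟨c, hc, rfl⟩
    obtain ⟨t', c', hLI, hc', hsum⟩ := cara_aux g (Finset.univ.card) Finset.univ
      le_rfl c hc
    exact Set.mem_iUnion.2 ⟨⟨t', hLI⟩, c', hc', hsum.symm⟩
  · intro hx
    obtain ⟨⟨t, hLI⟩, c, hc, rfl⟩ := Set.mem_iUnion.1 hx
    classical
    refine ⟨fun i => if i ∈ t then c i else 0, ?_, ?_⟩
    · intro i; by_cases h : i ∈ t <;> simp [h, hc]
    · simp [ite_smul, Finset.sum_ite_mem]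
  
lemma coneSet_isClosed (g : ι → EuclideanSpace ℝ κ) : IsClosed (coneSet g) := by
  rw [coneSet_eq_iUnion]
  exact isClosed_iUnion_of_finite fun t => pieceSet_isClosed g t.1 t.2

noncomputable def coneCone (g : ι → EuclideanSpace ℝ κ) : ConvexCone ℝ (EuclideanSpace ℝ κ) where
  carrier := coneSet g
  smul_mem' := by
    rintro r hr x ⟨c, hc, rfl⟩
    refine ⟨fun i => r * c i, fun i => mul_nonneg hr.le (hc i), ?_⟩
    rw [Finset.smul_sum]
    simp [smul_smul]
  add_mem' := by
    rintro x ⟨c, hc, rfl⟩ y ⟨c', hc', rfl⟩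
    refine ⟨fun i => c i + c' i, fun i => add_nonneg (hc i) (hc' i), ?_⟩
    simp [add_smul, Finset.sum_add_distrib]

lemma farkas (g : ι → EuclideanSpace ℝ κ) (b : EuclideanSpace ℝ κ)
    (h : ∀ w : EuclideanSpace ℝ κ, (∀ i, (0:ℝ) ≤ inner ℝ (g i) w) → (0:ℝ) ≤ inner ℝ b w) :
    ∃ c : ι → ℝ, (∀ i, 0 ≤ c i) ∧ b = ∑ i, c i • g i := by
  by_contra hb
  have hbn : b ∉ coneCone g := hb
  have hne : (coneCone g : Set (EuclideanSpace ℝ κ)).Nonempty :=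
    ⟨0, fun _ => 0, fun i => le_rfl, by simp⟩
  let C : ProperCone ℝ (EuclideanSpace ℝ κ) :=
    { carrier := coneSet g
      zero_mem' := ⟨fun _ => 0, fun i => le_rfl, by simp⟩
      add_mem' := fun ha hb => (coneCone g).add_mem' ha hb
      smul_mem' := by
        rintro r x ⟨c, hc, rfl⟩
        refine ⟨fun i => (r:ℝ) * c i, fun i => mul_nonneg r.2 (hc i), ?_⟩
        show (r:ℝ) • ∑ i, c i • g i = _
        rw [Finset.smul_sum]
        simp [smul_smul]
      isClosed' := coneSet_isClosed g }
  obtain ⟨y, hy1, hy2⟩ := ProperCone.hyperplane_separation' C (x₀ := b) (fun h => hbn h)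
  have hgy : ∀ i, (0:ℝ) ≤ inner ℝ (g i) y := by
    intro i
    apply hy1
    refine ⟨fun i' => if i' = i then 1 else 0, ?_, ?_⟩
    · intro i'; by_cases h' : i' = i <;> simp [h']
    · simp [ite_smul, Finset.sum_ite_eq']
  have := h y hgy
  rw [real_inner_comm] at this
  linarith [real_inner_comm y b]
end F2


def tradeGen {m s n K : ℕ} (X : Fin n → Fin m → ℝ) (Y : Fin n → Fin s → ℝ)
    (Rm : Fin m → Fin K → ℝ) (Rp : Fin s → Fin K → ℝ) :
    (Fin n ⊕ Fin K) ⊕ (Fin m ⊕ Fin s) → EuclideanSpace ℝ ((Fin m ⊕ Fin s) ⊕ Unit)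
  | .inl (.inl j) => WithLp.toLp 2 (Sum.elim (Sum.elim (fun i => X j i) (fun r => Y j r)) (fun _ => 1))
  | .inl (.inr t) => WithLp.toLp 2 (Sum.elim (Sum.elim (fun i => Rm i t) (fun r => Rp r t)) (fun _ => 0))
  | .inr (.inl i0) =>
      WithLp.toLp 2 (Sum.elim (Sum.elim (fun i => if i = i0 then 1 else 0) (fun _ => 0)) (fun _ => 0))
  | .inr (.inr r0) =>
      WithLp.toLp 2 (Sum.elim (Sum.elim (fun _ => 0) (fun r => if r = r0 then (-1:ℝ) else 0)) (fun _ => 0))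

def tradeB {m s : ℕ} (x : Fin m → ℝ) (y : Fin s → ℝ) :
    EuclideanSpace ℝ ((Fin m ⊕ Fin s) ⊕ Unit) :=
  WithLp.toLp 2 (Sum.elim (Sum.elim x y) (fun _ => 1))

lemma einner {κ : Type*} [Fintype κ] (a w : EuclideanSpace ℝ κ) :
    (inner ℝ a w : ℝ) = ∑ p, a p * w p := by
  simp [PiLp.inner_apply, RCLike.inner_apply, conj_trivial]
  exact Finset.sum_congr rfl fun _ _ => mul_comm _ _

lemma sum_smul_apply' {ι κ : Type*} [Fintype ι] [Fintype κ]
    (g : ι → EuclideanSpace ℝ κ) (c : ι → ℝ) (p : κ) :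
    (∑ i, c i • g i) p = ∑ i, c i * g i p := by
  have := map_sum (EuclideanSpace.proj p (𝕜 := ℝ)) (fun i => c i • g i) univ
  simp only [map_smul, smul_eq_mul, PiLp.proj_apply] at this
  exact this

lemma mc {N : ℕ} (a b : Fin N → ℝ) : ∑ i, a i * b i = ∑ i, b i * a i :=
  Finset.sum_congr rfl fun i _ => mul_comm _ _


end FarkasAux

/-- dual description of the trade-offs production set `P`. -/
theorem stmt12 {m s n K : ℕ} (hn : 0 < n)
    (X : Fin n → Fin m → ℝ) (Y : Fin n → Fin s → ℝ)
    (Rm : Fin m → Fin K → ℝ) (Rp : Fin s → Fin K → ℝ)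
    (hdata : ∀ j, (∀ i, 0 ≤ X j i) ∧ (∀ r, 0 ≤ Y j r)) :
    Pcons X Y Rm Rp =
      {p : Pt m s | ∀ w ∈ Wset X Y Rm Rp,
        w.2.2 ≤ dot w.1 p.1 - dot w.2.1 p.2} := by
  ext p
  simp only [Pcons, Wset, Set.mem_setOf_eq]
  constructor
  · rintro ⟨lam, π, hlam, hπ, hsum, hx, hy⟩ ⟨v, u, σ⟩ ⟨-, hw2, hw3, hw4, hw5⟩
    simp only at *
    have h1 : ∑ i, v i * ((∑ j, lam j * X j i) + (∑ t, Rm i t * π t)) ≤ dot v p.1 :=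
      Finset.sum_le_sum fun i _ => mul_le_mul_of_nonneg_left (hx i) (hw4 i)
    have h2 : dot u p.2 ≤ ∑ r, u r * ((∑ j, lam j * Y j r) + (∑ t, Rp r t * π t)) :=
      Finset.sum_le_sum fun r _ => mul_le_mul_of_nonneg_left (hy r) (hw5 r)
    have e1 : ∑ i, v i * ((∑ j, lam j * X j i) + (∑ t, Rm i t * π t)) =
        (∑ j, lam j * dot v (X j)) + ∑ t, π t * (∑ i, v i * Rm i t) := by
      simp only [mul_add, Finset.sum_add_distrib, Finset.mul_sum, dot]
      congr 1
      · rw [Finset.sum_comm]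
        exact Finset.sum_congr rfl fun j _ => Finset.sum_congr rfl fun i _ => by ring
      · rw [Finset.sum_comm]
        exact Finset.sum_congr rfl fun t _ => Finset.sum_congr rfl fun i _ => by ring
    have e2 : ∑ r, u r * ((∑ j, lam j * Y j r) + (∑ t, Rp r t * π t)) =
        (∑ j, lam j * dot u (Y j)) + ∑ t, π t * (∑ r, u r * Rp r t) := by
      simp only [mul_add, Finset.sum_add_distrib, Finset.mul_sum, dot]
      congr 1
      · rw [Finset.sum_comm]
        exact Finset.sum_congr rfl fun j _ => Finset.sum_congr rfl fun r _ => by ring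
      · rw [Finset.sum_comm]
        exact Finset.sum_congr rfl fun t _ => Finset.sum_congr rfl fun r _ => by ring
    have hA : 0 ≤ ∑ j, lam j * (dot v (X j) - dot u (Y j) - σ) :=
      Finset.sum_nonneg fun j _ => mul_nonneg (hlam j) (hw2 j)
    have hB : 0 ≤ ∑ t, π t * ((∑ i, v i * Rm i t) - ∑ r, u r * Rp r t) :=
      Finset.sum_nonneg fun t _ => mul_nonneg (hπ t) (hw3 t)
    have eA : ∑ j, lam j * (dot v (X j) - dot u (Y j) - σ) =
        (∑ j, lam j * dot v (X j)) - (∑ j, lam j * dot u (Y j)) - σ := by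
      simp only [mul_sub, Finset.sum_sub_distrib, ← Finset.sum_mul, hsum, one_mul]
    have eB : ∑ t, π t * ((∑ i, v i * Rm i t) - ∑ r, u r * Rp r t) =
        (∑ t, π t * (∑ i, v i * Rm i t)) - ∑ t, π t * (∑ r, u r * Rp r t) := by
      simp only [mul_sub, Finset.sum_sub_distrib]
    linarith
  · intro hp0
    have hp : ∀ v u σ, ((∑ i, v i) + (∑ r, u r) = 1 ∧
        (∀ j, 0 ≤ dot v (X j) - dot u (Y j) - σ) ∧
        (∀ t, 0 ≤ (∑ i, v i * Rm i t) - ∑ r, u r * Rp r t) ∧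
        (∀ i, 0 ≤ v i) ∧ (∀ r, 0 ≤ u r)) → σ ≤ dot v p.1 - dot u p.2 :=
      fun v u σ h => hp0 ⟨v, u, σ⟩ h
    have hfar : ∀ w : EuclideanSpace ℝ ((Fin m ⊕ Fin s) ⊕ Unit),
        (∀ i, (0:ℝ) ≤ inner ℝ (tradeGen X Y Rm Rp i) w) →
        (0:ℝ) ≤ inner ℝ (tradeB p.1 p.2) w := by
      intro w hw
      set v : Fin m → ℝ := fun i => w (.inl (.inl i)) with hvdef
      set u : Fin s → ℝ := fun r => - w (.inl (.inr r)) with hudef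
      set σ : ℝ := - w (.inr ()) with hσdef
      have hv : ∀ i, 0 ≤ v i := by
        intro i
        have := hw (.inr (.inl i))
        rw [einner] at this
        simpa [tradeGen, PiLp.toLp_apply, Fintype.sum_sum_type, ite_mul, Finset.sum_ite_eq', hvdef] using this
      have hu : ∀ r, 0 ≤ u r := by
        intro r
        have := hw (.inr (.inr r))
        rw [einner] at this
        simp only [tradeGen, PiLp.toLp_apply, Fintype.sum_sum_type, Sum.elim_inl, Sum.elim_inr, ite_mul,
          neg_mul, one_mul, zero_mul, Finset.sum_const_zero, Finset.sum_neg_distrib,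
          Finset.sum_ite_eq', Finset.mem_univ, if_true, add_zero, zero_add] at this
        simp only [hudef]
        linarith
      have hj : ∀ j, 0 ≤ dot v (X j) - dot u (Y j) - σ := by
        intro j
        have := hw (.inl (.inl j))
        rw [einner] at this
        simp only [tradeGen, PiLp.toLp_apply, Fintype.sum_sum_type, Sum.elim_inl, Sum.elim_inr, one_mul,
          Finset.univ_unique, Finset.sum_singleton] at this
        have e1 : dot v (X j) = ∑ x, X j x * w (.inl (.inl x)) := by
          rw [dot, hvdef]; exact mc _ _
        have e2 : dot u (Y j) = - ∑ x, Y j x * w (.inl (.inr x)) := by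
          rw [dot, hudef, ← Finset.sum_neg_distrib]
          exact Finset.sum_congr rfl fun r _ => by ring
        rw [e1, e2, hσdef]
        linarith
      have ht : ∀ t, 0 ≤ (∑ i, v i * Rm i t) - ∑ r, u r * Rp r t := by
        intro t
        have := hw (.inl (.inr t))
        rw [einner] at this
        simp only [tradeGen, PiLp.toLp_apply, Fintype.sum_sum_type, Sum.elim_inl, Sum.elim_inr, zero_mul,
          Finset.univ_unique, Finset.sum_singleton, Finset.sum_const_zero, add_zero] at this
        have e1 : ∑ i, v i * Rm i t = ∑ x, Rm x t * w (.inl (.inl x)) := by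
          rw [hvdef]; exact mc _ _
        have e2 : ∑ r, u r * Rp r t = - ∑ x, Rp x t * w (.inl (.inr x)) := by
          rw [hudef, ← Finset.sum_neg_distrib]
          exact Finset.sum_congr rfl fun r _ => by ring
        rw [e1, e2]
        linarith
      -- goal : 0 ≤ inner (tradeB p.1 p.2) w
      rw [einner]
      simp only [tradeB, PiLp.toLp_apply, Fintype.sum_sum_type, Sum.elim_inl, Sum.elim_inr, one_mul,
        Finset.univ_unique, Finset.sum_singleton]
      have e1 : ∑ x, p.1 x * w (.inl (.inl x)) = dot v p.1 := by
        rw [dot, hvdef]; exact (mc _ _).symm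
      have e2 : ∑ x, p.2 x * w (.inl (.inr x)) = - dot u p.2 := by
        rw [dot, hudef, ← Finset.sum_neg_distrib]
        exact Finset.sum_congr rfl fun r _ => by ring
      rw [e1, e2]
      -- case split on c := ∑ v + ∑ u
      set c : ℝ := (∑ i, v i) + (∑ r, u r) with hcdef
      rcases eq_or_lt_of_le (add_nonneg (Finset.sum_nonneg fun i _ => hv i) (Finset.sum_nonneg fun r _ => hu r) : (0:ℝ) ≤ c) with hc | hc
      · -- c = 0 : all v, u vanish
        have hv0 : ∀ i, v i = 0 := by
          intro i
          have h1 : ∑ i, v i = 0 := by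
            have h2 : 0 ≤ ∑ i, v i := Finset.sum_nonneg fun i _ => hv i
            have h3 : 0 ≤ ∑ r, u r := Finset.sum_nonneg fun r _ => hu r
            linarith [hc.symm]
          exact (Finset.sum_eq_zero_iff_of_nonneg fun i _ => hv i).1 h1 i (Finset.mem_univ i)
        have hu0 : ∀ r, u r = 0 := by
          intro r
          have h1 : ∑ r, u r = 0 := by
            have h2 : 0 ≤ ∑ i, v i := Finset.sum_nonneg fun i _ => hv i
            have h3 : 0 ≤ ∑ r, u r := Finset.sum_nonneg fun r _ => hu r
            linarith [hc.symm]
          exact (Finset.sum_eq_zero_iff_of_nonneg fun r _ => hu r).1 h1 r (Finset.mem_univ r)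
        have hσ0 : σ ≤ 0 := by
          have := hj ⟨0, hn⟩
          have ev : dot v (X ⟨0, hn⟩) = 0 := by
            rw [dot]; exact Finset.sum_eq_zero fun i _ => by rw [hv0 i, zero_mul]
          have eu : dot u (Y ⟨0, hn⟩) = 0 := by
            rw [dot]; exact Finset.sum_eq_zero fun r _ => by rw [hu0 r, zero_mul]
          linarith
        have ev : dot v p.1 = 0 := by
          rw [dot]; exact Finset.sum_eq_zero fun i _ => by rw [hv0 i, zero_mul]
        have eu : dot u p.2 = 0 := by
          rw [dot]; exact Finset.sum_eq_zero fun r _ => by rw [hu0 r, zero_mul]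
        rw [ev, eu]
        linarith
      · -- c > 0 : scale into Wset
        have hcne : c ≠ 0 := ne_of_gt hc
        have hdv : ∀ z : Fin m → ℝ, dot (fun i => v i / c) z = dot v z / c := by
          intro z
          rw [dot, dot, Finset.sum_div]
          exact Finset.sum_congr rfl fun i _ => by ring
        have hdu : ∀ z : Fin s → ℝ, dot (fun r => u r / c) z = dot u z / c := by
          intro z
          rw [dot, dot, Finset.sum_div]
          exact Finset.sum_congr rfl fun r _ => by ring
        have hmem : (∑ i, v i / c) + (∑ r, u r / c) = 1 ∧
            (∀ j, 0 ≤ dot (fun i => v i / c) (X j) - dot (fun r => u r / c) (Y j) - σ / c) ∧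
            (∀ t, 0 ≤ (∑ i, (v i / c) * Rm i t) - ∑ r, (u r / c) * Rp r t) ∧
            (∀ i, 0 ≤ v i / c) ∧ (∀ r, 0 ≤ u r / c) := by
          refine ⟨?_, ?_, ?_, fun i => div_nonneg (hv i) hc.le, fun r => div_nonneg (hu r) hc.le⟩
          · rw [← Finset.sum_div, ← Finset.sum_div, ← add_div, ← hcdef, div_self hcne]
          · intro j
            rw [hdv, hdu, div_sub_div_same, div_sub_div_same]
            exact div_nonneg (hj j) hc.le
          · intro t
            have e3 : ∑ i, (v i / c) * Rm i t = (∑ i, v i * Rm i t) / c := by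
              rw [Finset.sum_div]; exact Finset.sum_congr rfl fun i _ => by ring
            have e4 : ∑ r, (u r / c) * Rp r t = (∑ r, u r * Rp r t) / c := by
              rw [Finset.sum_div]; exact Finset.sum_congr rfl fun r _ => by ring
            rw [e3, e4, div_sub_div_same]
            exact div_nonneg (ht t) hc.le
        have hfin := hp (fun i => v i / c) (fun r => u r / c) (σ / c) hmem
        rw [hdv, hdu, div_sub_div_same] at hfin
        have h5 := mul_le_mul_of_nonneg_right hfin hc.le
        rw [div_mul_cancel₀ _ hcne, div_mul_cancel₀ _ hcne] at h5
        linarith [hσdef]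
    obtain ⟨co, hco, hb⟩ := farkas (tradeGen X Y Rm Rp) (tradeB p.1 p.2) hfar
    have hcoord : ∀ q, tradeB p.1 p.2 q = ∑ i, co i * tradeGen X Y Rm Rp i q := by
      intro q; rw [hb]; exact sum_smul_apply' _ _ q
    refine ⟨fun j => co (.inl (.inl j)), fun t => co (.inl (.inr t)),
      fun j => hco _, fun t => hco _, ?_, ?_, ?_⟩
    · have := hcoord (.inr ())
      simp only [tradeB, PiLp.toLp_apply, tradeGen, Fintype.sum_sum_type, Sum.elim_inl, Sum.elim_inr,
        mul_one, mul_zero, Finset.sum_const_zero, add_zero, zero_add] at this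
      exact this.symm
    · intro i
      have := hcoord (.inl (.inl i))
      simp only [tradeB, PiLp.toLp_apply, tradeGen, Fintype.sum_sum_type, Sum.elim_inl, Sum.elim_inr,
        mul_ite, mul_one, mul_zero, mul_neg, Finset.sum_const_zero, add_zero, zero_add,
        Finset.sum_ite_eq, Finset.mem_univ, if_true] at this
      have h6 : ∑ t, Rm i t * co (.inl (.inr t)) = ∑ t, co (.inl (.inr t)) * Rm i t :=
        mc _ _
      have h7 := hco (Sum.inr (Sum.inl i))
      rw [h6]
      linarith [this]
    · intro r
      have := hcoord (.inl (.inr r))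
      simp only [tradeB, PiLp.toLp_apply, tradeGen, Fintype.sum_sum_type, Sum.elim_inl, Sum.elim_inr,
        mul_ite, mul_one, mul_zero, mul_neg, Finset.sum_const_zero, add_zero, zero_add,
        Finset.sum_ite_eq, Finset.mem_univ, if_true] at this
      have h6 : ∑ t, Rp r t * co (.inl (.inr t)) = ∑ t, co (.inl (.inr t)) * Rp r t :=
        mc _ _
      have h7 := hco (Sum.inr (Sum.inr r))
      rw [h6]
      linarith [this]
end
end

section
/- Suppose the optimal value of min{u_r : v·1_m + u·1_s = 1, vR⁻ − uR⁺ ≥ 0, v ≥ 0, u ≥ 0} is positive for every r = 1,…,s. Then the LP max{Σ_{r=1}^s d⁺_r : (0, d⁺) ∈ P, d⁺ ∈ ℝ^s_+} has positive optimal value if and only if there exists y ∈ ℝ^s_+ \ {0} with (0, y) ∈ T, where T = P ∩ (ℝ^m_+ × (ℝ^s_+ \ {0})). -/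
noncomputable section

open Finset

/-- Feasible multipliers of the normalization LP (29). -/
def ratioFeas {m s K : ℕ} (Rm : Fin m → Fin K → ℝ) (Rp : Fin s → Fin K → ℝ)
    (w : Fin m → ℝ) (z : Fin s → ℝ) : Prop :=
  (∑ i, w i) + (∑ r, z r) = 1 ∧
  (∀ t, 0 ≤ (∑ i, w i * Rm i t) - ∑ r, z r * Rp r t) ∧
  (∀ i, 0 ≤ w i) ∧ (∀ r, 0 ≤ z r)

lemma cone_carath {ι : Type*} [Fintype ι] [DecidableEq ι] {E : Type*} [AddCommGroup E]
    [Module ℝ E] (v : ι → E) :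
    ∀ (N : ℕ) (c : ι → ℝ), (univ.filter (fun i => c i ≠ 0)).card ≤ N → (∀ i, 0 ≤ c i) →
      ∃ c' : ι → ℝ, (∀ i, 0 ≤ c' i) ∧ ∑ i, c' i • v i = ∑ i, c i • v i ∧
        LinearIndependent ℝ (fun i : {i // c' i ≠ 0} => v i) := by
  intro N
  induction N with
  | zero =>
    intro c hcard hc
    refine ⟨c, hc, rfl, ?_⟩
    have : ∀ i, c i = 0 := by
      intro i
      by_contra h
      have : i ∈ univ.filter (fun i => c i ≠ 0) := by simp [h]
      have := Finset.card_pos.2 ⟨i, this⟩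
      omega
    have : IsEmpty {i // c i ≠ 0} := ⟨fun i => i.2 (this i.1)⟩
    exact linearIndependent_empty_type
  | succ N ih =>
    intro c hcard hc
    by_cases hli : LinearIndependent ℝ (fun i : {i // c i ≠ 0} => v i)
    · exact ⟨c, hc, rfl, hli⟩
    -- get a dependency
    obtain ⟨g, hgsum, i0, hgi0⟩ := Fintype.not_linearIndependent_iff.1 hli
    -- extend to ι, ensuring a positive entry
    have key : ∃ d : ι → ℝ, (∑ i, d i • v i = 0) ∧ (∀ i, c i = 0 → d i = 0) ∧ ∃ i, 0 < d i := by
      set d : ι → ℝ := fun i => if h : c i ≠ 0 then g ⟨i, h⟩ else 0 with hd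
      have hsum : ∑ i, d i • v i = 0 := by
        rw [← hgsum]
        have e1 : ∑ i : {i // c i ≠ 0}, g i • v i.1 = ∑ i : {i // c i ≠ 0}, d i.1 • v i.1 :=
          Finset.sum_congr rfl fun i _ => by simp [hd, dif_pos i.2, i.2]
        rw [e1]
        rw [← Finset.sum_subtype (univ.filter (fun i => c i ≠ 0))
          (p := fun i => c i ≠ 0) (by simp) (fun i => d i • v i)]
        exact (Finset.sum_subset (Finset.filter_subset _ _) (fun i _ hni => by
          have : c i = 0 := by simpa using hni
          simp [hd, this])).symm
      have hzero : ∀ i, c i = 0 → d i = 0 := by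
        intro i h; simp [hd, h]
      have hne : d i0.1 ≠ 0 := by
        simpa [hd, i0.2] using hgi0
      by_cases hpos : ∃ i, 0 < d i
      · exact ⟨d, hsum, hzero, hpos⟩
      · refine ⟨-d, by simpa using hsum, fun i h => by simp [hzero i h], ⟨i0.1, ?_⟩⟩
        push_neg at hpos
        have := hpos i0.1
        have : d i0.1 < 0 := lt_of_le_of_ne this hne
        simpa using this
    obtain ⟨d, hdsum, hdzero, i1, hi1⟩ := key
    set T : Finset ι := univ.filter (fun i => 0 < d i) with hT
    have hTne : T.Nonempty := ⟨i1, by simp [hT, hi1]⟩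
    obtain ⟨i2, hi2T, hi2min⟩ := T.exists_min_image (fun i => c i / d i) hTne
    have hdi2 : 0 < d i2 := by simpa [hT] using hi2T
    set t : ℝ := c i2 / d i2 with ht
    have ht0 : 0 ≤ t := div_nonneg (hc i2) hdi2.le
    set c' : ι → ℝ := fun i => c i - t * d i with hc'
    have hc'nonneg : ∀ i, 0 ≤ c' i := by
      intro i
      rcases le_or_gt (d i) 0 with h | h
      · have : t * d i ≤ 0 := mul_nonpos_of_nonneg_of_nonpos ht0 h
        simp only [hc']; linarith [hc i]
      · have hiT : i ∈ T := by simp [hT, h]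
        have := hi2min i hiT
        have : t * d i ≤ c i := by
          rw [ht]
          calc c i2 / d i2 * d i ≤ c i / d i * d i := by
                apply mul_le_mul_of_nonneg_right this h.le
            _ = c i := div_mul_cancel₀ _ h.ne'
        simp only [hc']; linarith
    have hsum' : ∑ i, c' i • v i = ∑ i, c i • v i := by
      have : ∀ i, c' i • v i = c i • v i - t • (d i • v i) := by
        intro i; simp [hc', sub_smul, mul_smul]
      simp_rw [this]
      rw [Finset.sum_sub_distrib, ← Finset.smul_sum, hdsum, smul_zero, sub_zero]
    -- support strictly decreased
    have hsub : ∀ i, c' i ≠ 0 → (c i ≠ 0 ∧ i ≠ i2) := by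
      intro i h
      constructor
      · intro hci
        exact h (by simp [hc', hci, hdzero i hci])
      · intro he
        subst he
        exact h (by simp [hc', ht]; field_simp; ring)
    have hi2mem : c i2 ≠ 0 := by
      intro h
      have := hdzero i2 h
      rw [this] at hdi2; exact lt_irrefl _ hdi2
    have hcard' : (univ.filter (fun i => c' i ≠ 0)).card ≤ N := by
      have h1 : univ.filter (fun i => c' i ≠ 0) ⊆ (univ.filter (fun i => c i ≠ 0)).erase i2 := by
        intro i hi
        simp only [mem_filter, mem_univ, true_and] at hi
        obtain ⟨h2, h3⟩ := hsub i hi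
        simp [Finset.mem_erase, h2, h3]
      have h2 := Finset.card_le_card h1
      have h3 : ((univ.filter (fun i => c i ≠ 0)).erase i2).card
          = (univ.filter (fun i => c i ≠ 0)).card - 1 :=
        Finset.card_erase_of_mem (by simp [hi2mem])
      omega
    obtain ⟨c'', h1, h2, h3⟩ := ih c' hcard' hc'nonneg
    exact ⟨c'', h1, h2.trans hsum', h3⟩

lemma cone_isClosed {ι : Type*} [Fintype ι] [DecidableEq ι] {E : Type*} [NormedAddCommGroup E]
    [NormedSpace ℝ E] [FiniteDimensional ℝ E] (v : ι → E) :
    IsClosed {x : E | ∃ c : ι → ℝ, (∀ i, 0 ≤ c i) ∧ x = ∑ i, c i • v i} := by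
  classical
  let f : ∀ t : Finset ι, (({i // i ∈ t} → ℝ) →ₗ[ℝ] E) := fun t =>
    { toFun := fun c => ∑ i, c i • v i.1,
      map_add' := fun a b => by simp [add_smul, Finset.sum_add_distrib],
      map_smul' := fun r a => by simp [mul_smul, ← Finset.smul_sum] }
  have key : {x : E | ∃ c : ι → ℝ, (∀ i, 0 ≤ c i) ∧ x = ∑ i, c i • v i} =
      ⋃ t : {t : Finset ι // LinearIndependent ℝ (fun i : {i // i ∈ t} => v i.1)},
        (f t.1) '' {c | ∀ i, 0 ≤ c i} := by
    ext x
    constructor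
    · rintro ⟨c, hc, rfl⟩
      obtain ⟨c', hc'0, hc'sum, hc'li⟩ := cone_carath v (univ.filter (fun i => c i ≠ 0)).card c
        le_rfl hc
      set t : Finset ι := univ.filter (fun i => c' i ≠ 0) with hts
      have hmem : ∀ i : ι, i ∈ t ↔ c' i ≠ 0 := fun i => by simp [hts]
      have hli : LinearIndependent ℝ (fun i : {i // i ∈ t} => v i.1) := by
        have h2 := hc'li.comp (Equiv.subtypeEquivRight hmem) (Equiv.injective _)
        have he : (fun i : {i // i ∈ t} => v i.1)
            = (fun i : {i // c' i ≠ 0} => v i.1) ∘ ⇑(Equiv.subtypeEquivRight hmem) := by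
          funext i; rfl
        rw [he]; exact h2
      refine Set.mem_iUnion.2 ⟨⟨t, hli⟩, ⟨fun i => c' i.1, fun i => hc'0 i.1, ?_⟩⟩
      show ∑ i : {i // i ∈ t}, c' i.1 • v i.1 = ∑ i, c i • v i
      rw [Finset.sum_coe_sort t (fun i => c' i • v i), ← hc'sum]
      exact Finset.sum_subset (Finset.filter_subset _ _) (fun i _ hni => by
        have : c' i = 0 := by simpa [hts] using hni
        simp [this])
    · rintro hx
      obtain ⟨⟨t, hli⟩, c, hc, rfl⟩ := Set.mem_iUnion.1 hx
      refine ⟨fun i => if h : i ∈ t then c ⟨i, h⟩ else 0, fun i => ?_, ?_⟩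
      · by_cases h : i ∈ t
        · simpa [h] using hc ⟨i, h⟩
        · simp [h]
      · show ∑ i : {i // i ∈ t}, c i • v i.1
            = ∑ i : ι, (if h : i ∈ t then c ⟨i, h⟩ else 0) • v i
        rw [Finset.univ_eq_attach]
        have h1 : ∑ i ∈ t.attach, c i • v i.1
            = ∑ i ∈ t.attach, (if h : i.1 ∈ t then c ⟨i.1, h⟩ else 0) • v i.1 :=
          Finset.sum_congr rfl (fun i _ => by simp [i.2])
        have h2 : ∑ i ∈ t.attach, (if h : i.1 ∈ t then c ⟨i.1, h⟩ else 0) • v i.1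
            = ∑ i ∈ t, (if h : i ∈ t then c ⟨i, h⟩ else 0) • v i :=
          Finset.sum_attach t (fun i => (if h : i ∈ t then c ⟨i, h⟩ else 0) • v i)
        rw [h1, h2]
        exact Finset.sum_subset (Finset.subset_univ t) (fun i _ hni => by simp [hni])
  rw [key]
  refine isClosed_iUnion_of_finite fun t => ?_
  have hker : LinearMap.ker (f t.1) = ⊥ := by
    rw [LinearMap.ker_eq_bot']
    intro c hc0
    have := Fintype.linearIndependent_iff.1 t.2 c hc0
    funext i; exact this i
  have hclosed : IsClosed {c : {i // i ∈ t.1} → ℝ | ∀ i, 0 ≤ c i} := by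
    have : {c : {i // i ∈ t.1} → ℝ | ∀ i, 0 ≤ c i}
        = ⋂ i, (fun c : {i // i ∈ t.1} → ℝ => c i) ⁻¹' Set.Ici 0 := by
      ext c; simp [Set.mem_iInter]
    rw [this]
    exact isClosed_iInter fun i => isClosed_Ici.preimage (continuous_apply i)
  exact ((f t.1).isClosedEmbedding_of_injective hker).isClosedMap _ hclosed

/-- Generators of the cone encoding feasibility of `(0, d) ∈ Pcons`. -/
def genV {m s n K : ℕ} (X : Fin n → Fin m → ℝ) (Y : Fin n → Fin s → ℝ)
    (Rm : Fin m → Fin K → ℝ) (Rp : Fin s → Fin K → ℝ) :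
    (Fin n ⊕ Fin K) ⊕ (Fin m ⊕ Fin s) → (ℝ × (Fin m → ℝ) × (Fin s → ℝ))
  | Sum.inl (Sum.inl j) => (1, X j, Y j)
  | Sum.inl (Sum.inr t) => (0, fun i => Rm i t, fun r => Rp r t)
  | Sum.inr (Sum.inl i) => (0, Pi.single i 1, 0)
  | Sum.inr (Sum.inr r) => (0, 0, -Pi.single r 1)

lemma genV_sum {m s n K : ℕ} (X : Fin n → Fin m → ℝ) (Y : Fin n → Fin s → ℝ)
    (Rm : Fin m → Fin K → ℝ) (Rp : Fin s → Fin K → ℝ)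
    (c : (Fin n ⊕ Fin K) ⊕ (Fin m ⊕ Fin s) → ℝ) :
    ∑ i, c i • genV X Y Rm Rp i =
      (∑ j, c (Sum.inl (Sum.inl j)),
       fun i => (∑ j, c (Sum.inl (Sum.inl j)) * X j i)
         + (∑ t, c (Sum.inl (Sum.inr t)) * Rm i t) + c (Sum.inr (Sum.inl i)),
       fun r => (∑ j, c (Sum.inl (Sum.inl j)) * Y j r)
         + (∑ t, c (Sum.inl (Sum.inr t)) * Rp r t) - c (Sum.inr (Sum.inr r))) := by
  refine Prod.ext ?_ (Prod.ext ?_ ?_)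
  · simp [Prod.fst_sum, Fintype.sum_sum_type, genV]
  · funext i
    simp [Prod.snd_sum, Prod.fst_sum, Finset.sum_apply, Fintype.sum_sum_type, genV,
      Pi.single_apply, mul_ite, Finset.sum_ite_eq]
  · funext r
    simp [Prod.snd_sum, Finset.sum_apply, Fintype.sum_sum_type, genV,
      Pi.single_apply, mul_ite, Finset.sum_ite_eq, sub_eq_add_neg]

lemma pcons_iff_cone {m s n K : ℕ} (X : Fin n → Fin m → ℝ) (Y : Fin n → Fin s → ℝ)
    (Rm : Fin m → Fin K → ℝ) (Rp : Fin s → Fin K → ℝ) (d : Fin s → ℝ) :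
    (∃ c : (Fin n ⊕ Fin K) ⊕ (Fin m ⊕ Fin s) → ℝ, (∀ i, 0 ≤ c i) ∧
      ((1:ℝ), (0 : Fin m → ℝ), d) = ∑ i, c i • genV X Y Rm Rp i) ↔
    ((0 : Fin m → ℝ), d) ∈ Pcons X Y Rm Rp := by
  constructor
  · rintro ⟨c, hc, heq⟩
    rw [genV_sum] at heq
    have e1 : (1:ℝ) = ∑ j, c (Sum.inl (Sum.inl j)) := congrArg Prod.fst heq
    have e2 := congrArg (fun p : ℝ × (Fin m → ℝ) × (Fin s → ℝ) => p.2.1) heq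
    have e3 := congrArg (fun p : ℝ × (Fin m → ℝ) × (Fin s → ℝ) => p.2.2) heq
    refine ⟨fun j => c (Sum.inl (Sum.inl j)), fun t => c (Sum.inl (Sum.inr t)),
      fun j => hc _, fun t => hc _, e1.symm, ?_, ?_⟩
    · intro i
      have h0 := congrFun e2 i
      simp only [Pi.zero_apply] at h0 ⊢
      have hsl := hc (Sum.inr (Sum.inl i))
      have hcomm : (∑ t, Rm i t * c (Sum.inl (Sum.inr t)))
          = ∑ t, c (Sum.inl (Sum.inr t)) * Rm i t :=
        Finset.sum_congr rfl fun t _ => mul_comm _ _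
      rw [hcomm]
      linarith
    · intro r
      have h0 := congrFun e3 r
      simp only at h0
      have hsl := hc (Sum.inr (Sum.inr r))
      have hcomm : (∑ t, Rp r t * c (Sum.inl (Sum.inr t)))
          = ∑ t, c (Sum.inl (Sum.inr t)) * Rp r t :=
        Finset.sum_congr rfl fun t _ => mul_comm _ _
      show d r ≤ _ + ∑ t, Rp r t * c (Sum.inl (Sum.inr t))
      rw [hcomm]
      linarith
  · rintro ⟨lam, π, hlam, hpi, hsum, hin, hout⟩
    refine ⟨Sum.elim (Sum.elim lam π) (Sum.elim
        (fun i => -((∑ j, lam j * X j i) + ∑ t, Rm i t * π t))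
        (fun r => (∑ j, lam j * Y j r) + (∑ t, Rp r t * π t) - d r)), ?_, ?_⟩
    · rintro ((j | t) | (i | r))
      · simpa using hlam j
      · simpa using hpi t
      · have := hin i
        simp only [Pi.zero_apply] at this
        simpa using neg_nonneg.2 this
      · have := hout r
        simpa using sub_nonneg.2 this
    · rw [genV_sum]
      refine Prod.ext ?_ (Prod.ext ?_ ?_)
      · simpa using hsum.symm
      · funext i
        have hcomm : (∑ t, π t * Rm i t) = ∑ t, Rm i t * π t :=
          Finset.sum_congr rfl fun t _ => mul_comm _ _
        simp only [Sum.elim_inl, Sum.elim_inr, Pi.zero_apply]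
        rw [hcomm]
        ring
      · funext r
        have hcomm : (∑ t, π t * Rp r t) = ∑ t, Rp r t * π t :=
          Finset.sum_congr rfl fun t _ => mul_comm _ _
        simp only [Sum.elim_inl, Sum.elim_inr]
        rw [hcomm]
        ring

/-- free-lunch characterization. -/
theorem stmt15 {m s n K : ℕ} (hn : 0 < n)
    (X : Fin n → Fin m → ℝ) (Y : Fin n → Fin s → ℝ)
    (Rm : Fin m → Fin K → ℝ) (Rp : Fin s → Fin K → ℝ)
    (hdata : ∀ j, (∀ i, 0 ≤ X j i) ∧ (∀ r, 0 ≤ Y j r))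
    (hu : ∀ r, 0 < sInf {c : ℝ | ∃ w z, ratioFeas Rm Rp w z ∧ c = z r}) :
    (∃ g, IsGreatest {t : ℝ | ∃ d : Fin s → ℝ, (∀ r, 0 ≤ d r) ∧
        ((0 : Fin m → ℝ), d) ∈ Pcons X Y Rm Rp ∧ t = ∑ r, d r} g ∧ 0 < g) ↔
      ∃ yv : Fin s → ℝ, (∀ r, 0 ≤ yv r) ∧ yv ≠ 0 ∧
        ((0 : Fin m → ℝ), yv) ∈ Pcons X Y Rm Rp := by
  constructor
  · rintro ⟨g, ⟨⟨d, hd0, hdP, rfl⟩, _⟩, hgpos⟩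
    refine ⟨d, hd0, ?_, hdP⟩
    intro h
    rw [h] at hgpos
    simp at hgpos
  · rintro ⟨yv, hyv0, hyvne, hyvP⟩
    obtain ⟨r₀, hr₀⟩ := Function.ne_iff.1 hyvne
    have hr₀' : yv r₀ ≠ 0 := by simpa using hr₀
    -- obtain a strictly positive dual multiplier z
    have hne : {c : ℝ | ∃ w z, ratioFeas Rm Rp w z ∧ c = z r₀}.Nonempty := by
      by_contra h
      rw [Set.not_nonempty_iff_eq_empty] at h
      have := hu r₀
      rw [h, Real.sInf_empty] at this
      exact lt_irrefl _ this
    obtain ⟨_, w, z, hwz, rfl⟩ := hne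
    obtain ⟨hwz1, hwzt, hw0, hz0⟩ := hwz
    have hzpos : ∀ r, 0 < z r := by
      intro r
      have hmem : z r ∈ {c : ℝ | ∃ w' z', ratioFeas Rm Rp w' z' ∧ c = z' r} :=
        ⟨w, z, ⟨hwz1, hwzt, hw0, hz0⟩, rfl⟩
      have hbdd : BddBelow {c : ℝ | ∃ w' z', ratioFeas Rm Rp w' z' ∧ c = z' r} :=
        ⟨0, by rintro c ⟨w', z', hf, rfl⟩; exact hf.2.2.2 r⟩
      exact lt_of_lt_of_le (hu r) (csInf_le hbdd hmem)
    set Mz : ℝ := ∑ j, ∑ r, z r * Y j r with hMz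
    set S : Set (Fin s → ℝ) :=
      {d | (∀ r, 0 ≤ d r) ∧ ((0 : Fin m → ℝ), d) ∈ Pcons X Y Rm Rp} with hS
    -- boundedness
    have hbound : ∀ d ∈ S, ∀ r, d r ≤ Mz / z r := by
      rintro d ⟨hd0, lam, π, hlam0, hpi0, hlamsum, hin, hout⟩ r
      have key : ∑ r', z r' * d r' ≤ Mz := by
        have step1 : ∑ r', z r' * d r'
            ≤ ∑ r', z r' * ((∑ j, lam j * Y j r') + ∑ t, Rp r' t * π t) :=
          Finset.sum_le_sum fun r' _ => mul_le_mul_of_nonneg_left (hout r') (hz0 r')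
        have haveA : ∑ r', z r' * ∑ j, lam j * Y j r'
            = ∑ j, lam j * ∑ r', z r' * Y j r' := by
          simp_rw [Finset.mul_sum]
          rw [Finset.sum_comm]
          exact Finset.sum_congr rfl fun j _ => Finset.sum_congr rfl fun r' _ => by ring
        have haveB : ∑ r', z r' * ∑ t, Rp r' t * π t
            = ∑ t, (∑ r', z r' * Rp r' t) * π t := by
          simp_rw [Finset.mul_sum, Finset.sum_mul]
          rw [Finset.sum_comm]
          exact Finset.sum_congr rfl fun _ _ => Finset.sum_congr rfl fun _ _ => by ring
        have step1' : ∑ r', z r' * d r'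
            ≤ (∑ j, lam j * ∑ r', z r' * Y j r') + ∑ t, (∑ r', z r' * Rp r' t) * π t := by
          have : ∑ r', z r' * ((∑ j, lam j * Y j r') + ∑ t, Rp r' t * π t)
              = (∑ r', z r' * ∑ j, lam j * Y j r') + ∑ r', z r' * ∑ t, Rp r' t * π t := by
            simp_rw [mul_add]
            exact Finset.sum_add_distrib
          rw [← haveA, ← haveB]
          linarith [step1, this.le]
        have stepT : ∑ t, (∑ r', z r' * Rp r' t) * π t
            ≤ ∑ t, (∑ i, w i * Rm i t) * π t :=
          Finset.sum_le_sum fun t _ => mul_le_mul_of_nonneg_right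
            (by linarith [hwzt t]) (hpi0 t)
        have haveC : ∑ i, w i * ∑ t, Rm i t * π t
            = ∑ t, (∑ i, w i * Rm i t) * π t := by
          simp_rw [Finset.mul_sum, Finset.sum_mul]
          rw [Finset.sum_comm]
          exact Finset.sum_congr rfl fun _ _ => Finset.sum_congr rfl fun _ _ => by ring
        have stepW : ∑ t, (∑ i, w i * Rm i t) * π t ≤ 0 := by
          have hI : ∑ i, w i * ((∑ j, lam j * X j i) + (∑ t, Rm i t * π t)) ≤ 0 := by
            apply Finset.sum_nonpos
            intro i _
            exact mul_nonpos_of_nonneg_of_nonpos (hw0 i) (by simpa using hin i)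
          have hexp : ∑ i, w i * ((∑ j, lam j * X j i) + (∑ t, Rm i t * π t))
              = (∑ i, w i * ∑ j, lam j * X j i) + ∑ i, w i * ∑ t, Rm i t * π t := by
            simp_rw [mul_add]
            exact Finset.sum_add_distrib
          have haveD : 0 ≤ ∑ i, w i * ∑ j, lam j * X j i :=
            Finset.sum_nonneg fun i _ => mul_nonneg (hw0 i)
              (Finset.sum_nonneg fun j _ => mul_nonneg (hlam0 j) ((hdata j).1 i))
          rw [← haveC]
          linarith [hI, hexp.le, haveD]
        have stepM : ∑ j, lam j * ∑ r', z r' * Y j r' ≤ Mz := by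
          rw [hMz]
          refine Finset.sum_le_sum fun j _ => ?_
          have h1 : lam j ≤ 1 := by
            have := Finset.single_le_sum (f := lam) (fun j' _ => hlam0 j') (Finset.mem_univ j)
            linarith [hlamsum]
          have h2 : 0 ≤ ∑ r', z r' * Y j r' :=
            Finset.sum_nonneg fun r' _ => mul_nonneg (hz0 r') ((hdata j).2 r')
          nlinarith
        linarith
      have hzd : z r * d r ≤ ∑ r', z r' * d r' :=
        Finset.single_le_sum (f := fun r' => z r' * d r')
          (fun r' _ => mul_nonneg (hz0 r') (hd0 r')) (Finset.mem_univ r)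
      rw [le_div_iff₀ (hzpos r)]
      nlinarith
    -- closedness
    have hSclosed : IsClosed S := by
      have hphi : Continuous (fun d : Fin s → ℝ =>
          (((1:ℝ), ((0 : Fin m → ℝ), d)) : ℝ × (Fin m → ℝ) × (Fin s → ℝ))) :=
        continuous_const.prodMk (continuous_const.prodMk continuous_id)
      have hrw : S = {d : Fin s → ℝ | ∀ r, 0 ≤ d r} ∩
          ((fun d : Fin s → ℝ =>
            (((1:ℝ), ((0 : Fin m → ℝ), d)) : ℝ × (Fin m → ℝ) × (Fin s → ℝ))) ⁻¹'
            {x | ∃ c : (Fin n ⊕ Fin K) ⊕ (Fin m ⊕ Fin s) → ℝ, (∀ i, 0 ≤ c i) ∧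
              x = ∑ i, c i • genV X Y Rm Rp i}) := by
        ext d
        simp only [hS, Set.mem_setOf_eq, Set.mem_inter_iff, Set.mem_preimage]
        rw [pcons_iff_cone]
      rw [hrw]
      refine IsClosed.inter ?_ ((cone_isClosed (genV X Y Rm Rp)).preimage hphi)
      have : {d : Fin s → ℝ | ∀ r, 0 ≤ d r}
          = ⋂ r, (fun d : Fin s → ℝ => d r) ⁻¹' Set.Ici 0 := by
        ext dd; simp [Set.mem_iInter]
      rw [this]
      exact isClosed_iInter fun r => isClosed_Ici.preimage (continuous_apply r)
    -- compactness
    have hsub : S ⊆ Set.pi Set.univ (fun r => Set.Icc 0 (Mz / z r)) := by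
      intro d hd r _
      exact ⟨hd.1 r, hbound d hd r⟩
    have hcomp : IsCompact S :=
      (isCompact_univ_pi fun r => isCompact_Icc).of_isClosed_subset hSclosed hsub
    have hyvS : yv ∈ S := ⟨hyv0, hyvP⟩
    obtain ⟨dstar, hdstarS, hmax⟩ := hcomp.exists_isMaxOn ⟨yv, hyvS⟩
      ((continuous_finset_sum Finset.univ fun r _ => continuous_apply r).continuousOn)
    refine ⟨∑ r, dstar r, ⟨⟨dstar, hdstarS.1, hdstarS.2, rfl⟩, ?_⟩, ?_⟩
    · rintro t ⟨d, h1, h2, rfl⟩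
      exact hmax ⟨h1, h2⟩
    · have h1 : 0 < ∑ r, yv r :=
        Finset.sum_pos' (fun r _ => hyv0 r)
          ⟨r₀, Finset.mem_univ r₀, (hyv0 r₀).lt_of_ne' hr₀'⟩
      have h2 : ∑ r, yv r ≤ ∑ r, dstar r := hmax hyvS
      linarith
end
end

section
/- Let T = P ∩ (ℝ^m_+ × (ℝ^s_+ \ {0})) with P = {(x,y) : v^l·x − u^l·y − σ^l ≥ 0, l = 1,…,L}, all (v^l,u^l) strictly positive. Let (x,y) ∈ T, (x',y') ∈ T \ ∂^s(T), and let θ* ∈ (0,1]^m, φ* ≥ 1_s satisfy (θ*⊗x, φ*⊗y) ∈ ∂^s(T) with some constraint active: v^{l̄}·(θ*⊗x) − u^{l̄}·(φ*⊗y) − σ^{l̄} = 0 and v^{l̄}·(θ*⊗x') − u^{l̄}·(φ*⊗y') − σ^{l̄} < 0 for some l̄. Define α = max over those l with σ^l > v^l·(θ*⊗x') − u^l·(φ*⊗y') of [σ^l − v^l·(θ*⊗x') + u^l·(φ*⊗y')] / [v^l·((1_m − θ*)⊗x') − u^l·((1_s − φ*)⊗y')]. Then 0 < α < 1 and ((α1_m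 + (1−α)θ*)⊗x', (α1_s + (1−α)φ*)⊗y') ∈ ∂^s(T). -/
noncomputable section

open Finset

lemma dot_sub_mul {n : ℕ} (w c z : Fin n → ℝ) :
    dot w (fun i => (1 - c i) * z i) = dot w z - dot w (fun i => c i * z i) := by
  simp only [dot, ← Finset.sum_sub_distrib]
  exact Finset.sum_congr rfl (fun i _ => by ring)

lemma dot_affine {n : ℕ} (t : ℝ) (w c z : Fin n → ℝ) :
    dot w (fun i => (t + (1 - t) * c i) * z i)
      = t * dot w z + (1 - t) * dot w (fun i => c i * z i) := by
  simp only [dot, Finset.mul_sum, ← Finset.sum_add_distrib]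
  exact Finset.sum_congr rfl (fun i _ => by ring)

/-- the convex-combination projection step: `0 < α < 1` and the
combined point lies on the strongly efficient frontier of `T`. -/
theorem stmt16 {m s L : ℕ}
    (v : Fin L → Fin m → ℝ) (u : Fin L → Fin s → ℝ) (σ : Fin L → ℝ)
    (hpos : ∀ l, (∀ i, 0 < v l i) ∧ (∀ r, 0 < u l r))
    (hchar : ∀ p ∈ TSet v u σ, p ∈ strongF (TSet v u σ) ↔
      ∃ l, dot (v l) p.1 - dot (u l) p.2 - σ l = 0)
    (x x' : Fin m → ℝ) (y y' : Fin s → ℝ)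
    (hxy : (x, y) ∈ TSet v u σ)
    (hxy' : (x', y') ∈ TSet v u σ) (hxy'ne : (x', y') ∉ strongF (TSet v u σ))
    (θ : Fin m → ℝ) (φ : Fin s → ℝ)
    (hθ : ∀ i, 0 < θ i ∧ θ i ≤ 1) (hφ : ∀ r, 1 ≤ φ r)
    (hfront : ((fun i => θ i * x i), (fun r => φ r * y r)) ∈ strongF (TSet v u σ))
    (lbar : Fin L)
    (hact : dot (v lbar) (fun i => θ i * x i) -
      dot (u lbar) (fun r => φ r * y r) - σ lbar = 0)
    (hneg : dot (v lbar) (fun i => θ i * x' i) -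
      dot (u lbar) (fun r => φ r * y' r) - σ lbar < 0)
    (α : ℝ)
    (hα : α = sSup {a : ℝ | ∃ l : Fin L,
      dot (v l) (fun i => θ i * x' i) - dot (u l) (fun r => φ r * y' r) < σ l ∧
      a = (σ l - dot (v l) (fun i => θ i * x' i) +
            dot (u l) (fun r => φ r * y' r)) /
          (dot (v l) (fun i => (1 - θ i) * x' i) -
            dot (u l) (fun r => (1 - φ r) * y' r))}) :
    0 < α ∧ α < 1 ∧
      ((fun i => (α + (1 - α) * θ i) * x' i),
       (fun r => (α + (1 - α) * φ r) * y' r)) ∈ strongF (TSet v u σ) := by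

  set A : Fin L → ℝ := fun l =>
    dot (v l) (fun i => θ i * x' i) - dot (u l) (fun r => φ r * y' r) with hAdef
  set B : Fin L → ℝ := fun l => dot (v l) x' - dot (u l) y' with hBdef
  have hB : ∀ l, σ l < B l := by
    intro l
    have h1 : 0 ≤ B l - σ l := hxy'.1 l
    have h2 : B l - σ l ≠ 0 := by
      intro h0
      exact hxy'ne (((hchar _ hxy').mpr ⟨l, h0⟩))
    have := lt_of_le_of_ne h1 (Ne.symm h2)
    linarith
  have hD : ∀ l, dot (v l) (fun i => (1 - θ i) * x' i) -
      dot (u l) (fun r => (1 - φ r) * y' r) = B l - A l := by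
    intro l
    rw [dot_sub_mul, dot_sub_mul]
    simp only [hAdef, hBdef]
    ring
  set f : Fin L → ℝ := fun l => (σ l - A l) / (B l - A l) with hfdef
  set S : Finset (Fin L) := Finset.univ.filter (fun l => A l < σ l) with hSdef
  have hlbarS : lbar ∈ S := by
    simp only [hSdef, Finset.mem_filter, Finset.mem_univ, true_and]
    have : A lbar - σ lbar < 0 := hneg
    linarith
  have hSne : (S.image f).Nonempty := ⟨f lbar, Finset.mem_image_of_mem f hlbarS⟩
  have hBA : ∀ l ∈ S, 0 < B l - A l := by
    intro l hl
    simp only [hSdef, Finset.mem_filter, Finset.mem_univ, true_and] at hl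
    have := hB l
    linarith
  have hf01 : ∀ l ∈ S, 0 < f l ∧ f l < 1 := by
    intro l hl
    have hba := hBA l hl
    simp only [hSdef, Finset.mem_filter, Finset.mem_univ, true_and] at hl
    have hn : 0 < σ l - A l := by linarith
    have hlt : σ l - A l < B l - A l := by have := hB l; linarith
    exact ⟨div_pos hn hba, (div_lt_one hba).mpr hlt⟩
  have hset : {a : ℝ | ∃ l : Fin L,
      dot (v l) (fun i => θ i * x' i) - dot (u l) (fun r => φ r * y' r) < σ l ∧
      a = (σ l - dot (v l) (fun i => θ i * x' i) +
            dot (u l) (fun r => φ r * y' r)) /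
          (dot (v l) (fun i => (1 - θ i) * x' i) -
            dot (u l) (fun r => (1 - φ r) * y' r))} = ↑(S.image f) := by
    ext a
    simp only [Set.mem_setOf_eq, Finset.coe_image, Set.mem_image, Finset.mem_coe,
      hSdef, Finset.mem_filter, Finset.mem_univ, true_and, hfdef]
    constructor
    · rintro ⟨l, h1, h2⟩
      refine ⟨l, h1, ?_⟩
      rw [h2, hD l]
      congr 1
      simp only [hAdef]; ring
    · rintro ⟨l, h1, h2⟩
      refine ⟨l, h1, ?_⟩
      rw [← h2, hD l]
      congr 1
      simp only [hAdef]; ring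
  rw [hset] at hα
  rw [hSne.csSup_eq_max'] at hα
  have hαmem : α ∈ S.image f := hα ▸ (S.image f).max'_mem hSne
  obtain ⟨lstar, hlstarS, hflstar⟩ := Finset.mem_image.mp hαmem
  have hαle : ∀ l ∈ S, f l ≤ α := fun l hl =>
    hα ▸ Finset.le_max' _ _ (Finset.mem_image_of_mem f hl)
  have hα0 : 0 < α := hflstar ▸ (hf01 lstar hlstarS).1
  have hα1 : α < 1 := hflstar ▸ (hf01 lstar hlstarS).2
  refine ⟨hα0, hα1, ?_⟩
  -- the candidate point
  have hexp : ∀ l, dot (v l) (fun i => (α + (1 - α) * θ i) * x' i) -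
      dot (u l) (fun r => (α + (1 - α) * φ r) * y' r) - σ l
      = (A l - σ l) + α * (B l - A l) := by
    intro l
    rw [dot_affine, dot_affine]
    simp only [hAdef, hBdef]; ring
  have hmemT : ((fun i => (α + (1 - α) * θ i) * x' i),
      (fun r => (α + (1 - α) * φ r) * y' r)) ∈ TSet v u σ := by
    refine ⟨?_, ?_, ?_, ?_⟩
    · intro l
      show 0 ≤ dot (v l) (fun i => (α + (1 - α) * θ i) * x' i) -
        dot (u l) (fun r => (α + (1 - α) * φ r) * y' r) - σ l
      rw [hexp l]
      by_cases hl : A l < σ l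
      · have hlS : l ∈ S := by
          simp only [hSdef, Finset.mem_filter, Finset.mem_univ, true_and]; exact hl
        have hba := hBA l hlS
        have hle := hαle l hlS
        have heq : f l * (B l - A l) = σ l - A l :=
          div_mul_cancel₀ _ (ne_of_gt hba)
        nlinarith [mul_le_mul_of_nonneg_right hle (le_of_lt hba)]
      · push_neg at hl
        have := hB l
        nlinarith
    · intro i
      have h1 : 0 ≤ α + (1 - α) * θ i := by nlinarith [(hθ i).1]
      exact mul_nonneg h1 (hxy'.2.1 i)
    · intro r
      have h1 : 0 ≤ α + (1 - α) * φ r := by nlinarith [hφ r]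
      exact mul_nonneg h1 (hxy'.2.2.1 r)
    · intro h0
      apply hxy'.2.2.2
      funext r
      have hr := congrFun h0 r
      have hc : 0 < α + (1 - α) * φ r := by nlinarith [hφ r]
      simp only at hr
      exact (mul_eq_zero.mp hr).resolve_left (ne_of_gt hc)
  refine (hchar _ hmemT).mpr ⟨lstar, ?_⟩
  show dot (v lstar) (fun i => (α + (1 - α) * θ i) * x' i) -
      dot (u lstar) (fun r => (α + (1 - α) * φ r) * y' r) - σ lstar = 0
  rw [hexp lstar]
  have hba := hBA lstar hlstarS
  have heq : f lstar * (B lstar - A lstar) = σ lstar - A lstar :=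
    div_mul_cancel₀ _ (ne_of_gt hba)
  rw [← hflstar]
  linarith
end
end

section
/- Let P = {(x,y) ∈ ℝ^m × ℝ^s : v^l·x − u^l·y − σ^l ≥ 0, l = 1,…,L} be nonempty with each (v^l,u^l) nonzero and nonnegative and each constraint defining a facet. Then the weakly efficient frontier of P equals the union of the faces cut by the constraints: ∂^w(P) = ⋃_{l=1}^L {(x,y) ∈ P : v^l·x − u^l·y − σ^l = 0}. -/
noncomputable section

open Finset

/-- the weakly efficient frontier of `P` is the union of the faces
cut out by the defining constraints. -/
theorem stmt19 {m s L : ℕ}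
    (v : Fin L → Fin m → ℝ) (u : Fin L → Fin s → ℝ) (σ : Fin L → ℝ)
    (hne : (polyP v u σ).Nonempty)
    (hvu_nonneg : ∀ l, (∀ i, 0 ≤ v l i) ∧ (∀ r, 0 ≤ u l r))
    (hvu_ne : ∀ l, (v l, u l) ≠ 0)
    (hmin : ∀ l, ∃ p ∈ polyP v u σ, dot (v l) p.1 - dot (u l) p.2 = σ l) :
    weakF (polyP v u σ) =
      ⋃ l, {p ∈ polyP v u σ | dot (v l) p.1 - dot (u l) p.2 = σ l} := by
  ext p
  simp only [weakF, Set.mem_iUnion, Set.mem_setOf_eq]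
  constructor
  · rintro ⟨hpP, hw⟩
    by_contra hall
    push_neg at hall
    have hslack : ∀ l, 0 < dot (v l) p.1 - dot (u l) p.2 - σ l := by
      intro l
      rcases (hpP l).lt_or_eq with h | h
      · exact h
      · exact absurd (by linarith : dot (v l) p.1 - dot (u l) p.2 = σ l) (hall l hpP)
    set S : Fin L → ℝ := fun l => (∑ i, v l i) + (∑ r, u l r) with hSdef
    have hS : ∀ l, 0 ≤ S l := by
      intro l
      have h1 : 0 ≤ ∑ i, v l i := Finset.sum_nonneg fun i _ => (hvu_nonneg l).1 i
      have h2 : 0 ≤ ∑ r, u l r := Finset.sum_nonneg fun r _ => (hvu_nonneg l).2 r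
      simpa [hSdef] using add_nonneg h1 h2
    set f : Fin L → ℝ := fun l => (dot (v l) p.1 - dot (u l) p.2 - σ l) / (S l + 1) with hfdef
    have hf : ∀ l, 0 < f l := fun l => div_pos (hslack l) (by linarith [hS l])
    obtain ⟨ε, hε0, hεf⟩ : ∃ ε : ℝ, 0 < ε ∧ ∀ l, ε ≤ f l := by
      rcases Nat.eq_zero_or_pos L with h0 | hL
      · exact ⟨1, one_pos, fun l => absurd l.isLt (by omega)⟩
      · have hne' : (Finset.univ : Finset (Fin L)).Nonempty := ⟨⟨0, hL⟩, Finset.mem_univ _⟩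
        refine ⟨Finset.univ.inf' hne' f, ?_, fun l => Finset.inf'_le f (Finset.mem_univ l)⟩
        exact (Finset.lt_inf'_iff hne').2 fun l _ => hf l
    set q : Pt m s := (fun i => p.1 i - ε, fun r => p.2 r + ε) with hqdef
    have hqP : q ∈ polyP v u σ := by
      intro l
      have hdv : dot (v l) q.1 = dot (v l) p.1 - ε * ∑ i, v l i := by
        simp only [dot, hqdef, mul_sub, Finset.sum_sub_distrib, Finset.mul_sum]
        exact congrArg _ (Finset.sum_congr rfl fun i _ => mul_comm _ _)
      have hdu : dot (u l) q.2 = dot (u l) p.2 + ε * ∑ r, u l r := by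
        simp only [dot, hqdef, mul_add, Finset.sum_add_distrib, Finset.mul_sum]
        exact congrArg _ (Finset.sum_congr rfl fun i _ => mul_comm _ _)
      have key : ε * S l ≤ dot (v l) p.1 - dot (u l) p.2 - σ l := by
        have h1 : ε ≤ f l := hεf l
        have h2 : 0 < S l + 1 := by linarith [hS l]
        have h3 : ε * (S l + 1) ≤ dot (v l) p.1 - dot (u l) p.2 - σ l := by
          have := mul_le_mul_of_nonneg_right h1 (le_of_lt h2)
          rwa [div_mul_cancel₀ _ (ne_of_gt h2)] at this
        nlinarith [hS l]
      simp only [hdv, hdu, hSdef] at key ⊢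
      linarith
    exact hw q (fun i => by simp [hqdef]; linarith) (fun r => by simp [hqdef]; linarith) hqP
  · rintro ⟨l, hpP, heq⟩
    refine ⟨hpP, fun q hq1 hq2 hqP => ?_⟩
    have hqv : dot (v l) q.1 ≤ dot (v l) p.1 :=
      Finset.sum_le_sum fun i _ => mul_le_mul_of_nonneg_left (le_of_lt (hq1 i)) ((hvu_nonneg l).1 i)
    have hqu : dot (u l) p.2 ≤ dot (u l) q.2 :=
      Finset.sum_le_sum fun r _ => mul_le_mul_of_nonneg_left (le_of_lt (hq2 r)) ((hvu_nonneg l).2 r)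
    have hne' : v l ≠ 0 ∨ u l ≠ 0 := by
      by_contra h
      push_neg at h
      exact hvu_ne l (by simp [Prod.ext_iff, h.1, h.2])
    have hstrict : dot (v l) q.1 - dot (u l) q.2 < σ l := by
      rcases hne' with h | h
      · obtain ⟨i, hi⟩ := Function.ne_iff.mp h
        have hvi : 0 < v l i := lt_of_le_of_ne ((hvu_nonneg l).1 i) (by simpa using Ne.symm hi)
        have : dot (v l) q.1 < dot (v l) p.1 :=
          Finset.sum_lt_sum (fun j _ => mul_le_mul_of_nonneg_left (le_of_lt (hq1 j)) ((hvu_nonneg l).1 j))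
            ⟨i, Finset.mem_univ i, by exact mul_lt_mul_of_pos_left (hq1 i) hvi⟩
        linarith
      · obtain ⟨r, hr⟩ := Function.ne_iff.mp h
        have hur : 0 < u l r := lt_of_le_of_ne ((hvu_nonneg l).2 r) (by simpa using Ne.symm hr)
        have : dot (u l) p.2 < dot (u l) q.2 :=
          Finset.sum_lt_sum (fun j _ => mul_le_mul_of_nonneg_left (le_of_lt (hq2 j)) ((hvu_nonneg l).2 j))
            ⟨r, Finset.mem_univ r, by exact mul_lt_mul_of_pos_left (hq2 r) hur⟩
        linarith
    have := hqP l
    linarith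
end
end
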